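/- arXiv:2006.11262 — 5 statements merged into one kernel-verified Lean document; each statement's English description precedes it below -/
import Mathlib

section
/- Let a, b, c, d be four points in the plane with a having strictly larger y-coordinate than b, c, and d, and with the x-coordinate of b either strictly smaller than the x-coordinates of both c and d, or strictly larger than the x-coordinates of both c and d. If additionally a lies strictly above the line through b and c while d lies strictly below the line through b and c, then the closed segments ab and cd do not intersect. -/
/-- Let `a, b, c, d ∈ ℝ²` with `a` strictly higher than `b, c, d`, and with the
`x`-coordinate of `b` strictly smaller than those of both `c` and `d`, or strictly
larger than both. If moreover `a` lies strictly above the line through `b` and `c`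
while `d` lies strictly below it, then the closed segments `ab` and `cd` are disjoint. -/
theorem stmt_3 (a b c d : ℝ × ℝ)
    (hba : b.2 < a.2) (hca : c.2 < a.2) (hda : d.2 < a.2)
    (hx : (b.1 < c.1 ∧ b.1 < d.1) ∨ (c.1 < b.1 ∧ d.1 < b.1))
    (habove : b.2 + (c.2 - b.2) / (c.1 - b.1) * (a.1 - b.1) < a.2)
    (hbelow : d.2 < b.2 + (c.2 - b.2) / (c.1 - b.1) * (d.1 - b.1)) :
    segment ℝ a b ∩ segment ℝ c d = ∅ := by
  apply Set.eq_empty_iff_forall_notMem.2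
  rintro x ⟨⟨t, s, ht, hs, hts, hx1⟩, ⟨u, v, hu, hv, huv, hx2⟩⟩
  have heq : t • a + s • b = u • c + v • d := hx1.trans hx2.symm
  have e1 : t * a.1 + s * b.1 = u * c.1 + v * d.1 := by
    have := congrArg Prod.fst heq
    simpa using this
  have e2 : t * a.2 + s * b.2 = u * c.2 + v * d.2 := by
    have := congrArg Prod.snd heq
    simpa using this
  have key : t * ((a.2 - b.2) * (c.1 - b.1) - (c.2 - b.2) * (a.1 - b.1))
      = v * ((d.2 - b.2) * (c.1 - b.1) - (c.2 - b.2) * (d.1 - b.1)) := by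
    linear_combination (c.1 - b.1) * e2 - (c.2 - b.2) * e1
      - (c.1 * b.2 - c.2 * b.1) * hts + (c.1 * b.2 - c.2 * b.1) * huv
  have ha3 : (c.2 - b.2) / (c.1 - b.1) * (a.1 - b.1) < a.2 - b.2 := by linarith
  have hd3 : d.2 - b.2 < (c.2 - b.2) / (c.1 - b.1) * (d.1 - b.1) := by linarith
  rw [div_mul_eq_mul_div] at ha3 hd3
  rcases hx with ⟨h1, h2⟩ | ⟨h1, h2⟩
  · have pos : (0:ℝ) < c.1 - b.1 := by linarith
    have hFa : 0 < (a.2 - b.2) * (c.1 - b.1) - (c.2 - b.2) * (a.1 - b.1) := by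
      have := (div_lt_iff₀ pos).mp ha3
      linarith
    have hFd : (d.2 - b.2) * (c.1 - b.1) - (c.2 - b.2) * (d.1 - b.1) < 0 := by
      have := (lt_div_iff₀ pos).mp hd3
      linarith
    have hta : t * ((a.2 - b.2) * (c.1 - b.1) - (c.2 - b.2) * (a.1 - b.1)) = 0 :=
      le_antisymm (by rw [key]; exact mul_nonpos_of_nonneg_of_nonpos hv hFd.le)
        (mul_nonneg ht hFa.le)
    have hvd : v * ((d.2 - b.2) * (c.1 - b.1) - (c.2 - b.2) * (d.1 - b.1)) = 0 := by
      rw [← key]; exact hta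
    have ht0 : t = 0 := (mul_eq_zero.mp hta).resolve_right hFa.ne'
    have hv0 : v = 0 := (mul_eq_zero.mp hvd).resolve_right hFd.ne
    have hs1 : s = 1 := by linarith
    have hu1 : u = 1 := by linarith
    rw [ht0, hv0, hs1, hu1] at e1
    simp at e1
    linarith
  · have neg : c.1 - b.1 < 0 := by linarith
    have hFa : (a.2 - b.2) * (c.1 - b.1) - (c.2 - b.2) * (a.1 - b.1) < 0 := by
      have := (div_lt_iff_of_neg neg).mp ha3
      linarith
    have hFd : 0 < (d.2 - b.2) * (c.1 - b.1) - (c.2 - b.2) * (d.1 - b.1) := by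
      have := (lt_div_iff_of_neg neg).mp hd3
      linarith
    have hta : t * ((a.2 - b.2) * (c.1 - b.1) - (c.2 - b.2) * (a.1 - b.1)) = 0 :=
      le_antisymm (mul_nonpos_of_nonneg_of_nonpos ht hFa.le)
        (by rw [key]; exact mul_nonneg hv hFd.le)
    have hvd : v * ((d.2 - b.2) * (c.1 - b.1) - (c.2 - b.2) * (d.1 - b.1)) = 0 := by
      rw [← key]; exact hta
    have ht0 : t = 0 := (mul_eq_zero.mp hta).resolve_right hFa.ne
    have hv0 : v = 0 := (mul_eq_zero.mp hvd).resolve_right hFd.ne'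
    have hs1 : s = 1 := by linarith
    have hu1 : u = 1 := by linarith
    rw [ht0, hv0, hs1, hu1] at e1
    simp at e1
    linarith
end

section
/- For every positive integer h ≥ 2 and every n ≥ 3h², any convex geometric graph on n vertices that is universal for the family of n-vertex outerplanar graphs consisting of a spanning cycle plus h pairwise vertex-disjoint chords has at least c_h · n^(2-1/h) edges, for some constant c_h > 0 depending only on h. -/
set_option synthInstance.maxHeartbeats 1000000
set_option maxHeartbeats 1000000
open Fin.NatCast


/-- Adjacency along the cycle `v_0, …, v_{n-1}` of points in convex position. -/
def cycAdj {n : ℕ} (i j : Fin n) : Prop :=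
  i ≠ j ∧ (((i : ℕ) + 1) % n = (j : ℕ) ∨ ((j : ℕ) + 1) % n = (i : ℕ))

/-- Two chords of a convex polygon (vertices in circular order `0, …, n-1`) cross
iff their endpoints interleave. -/
def chordsCross {n : ℕ} (a b c d : Fin n) : Prop :=
  (min a b < min c d ∧ min c d < max a b ∧ max a b < max c d) ∨
  (min c d < min a b ∧ min a b < max c d ∧ max c d < max a b)

/-- A crossing-free embedding of the graph `H` into the convex geometric graph `G`. -/
def IsPlaneEmb {n : ℕ} (H G : SimpleGraph (Fin n)) (f : Fin n → Fin n) : Prop :=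
  Function.Injective f ∧ (∀ u v, H.Adj u v → G.Adj (f u) (f v)) ∧
  ∀ u v x y, H.Adj u v → H.Adj x y →
    u ≠ x → u ≠ y → v ≠ x → v ≠ y → ¬ chordsCross (f u) (f v) (f x) (f y)

/-- `G` is universal for a family `F` of graphs. -/
def UniversalFor {n : ℕ} (G : SimpleGraph (Fin n)) (F : Set (SimpleGraph (Fin n))) : Prop :=
  ∀ H ∈ F, ∃ f, IsPlaneEmb H G f

/-- The family `O_h(n)` of `n`-vertex outerplanar graphs consisting of a spanning
cycle plus `h` pairwise vertex-disjoint (noncrossing) chords. -/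
def Ofam (h n : ℕ) : Set (SimpleGraph (Fin n)) :=
  {H | ∃ (g : Fin n ≃ Fin n) (D : Finset (Fin n × Fin n)),
    D.card = h ∧
    (∀ p ∈ D, p.1 ≠ p.2 ∧ ¬ cycAdj p.1 p.2) ∧
    (∀ p ∈ D, ∀ q ∈ D, p ≠ q →
      p.1 ≠ q.1 ∧ p.1 ≠ q.2 ∧ p.2 ≠ q.1 ∧ p.2 ≠ q.2 ∧
      ¬ chordsCross p.1 p.2 q.1 q.2) ∧
    ∀ u v, H.Adj u v ↔ (cycAdj (g u) (g v) ∨ (g u, g v) ∈ D ∨ (g v, g u) ∈ D)}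


lemma chordsCross_iff {n : ℕ} (a b c d : Fin n) :
    chordsCross a b c d ↔
      ((min a.val b.val < min c.val d.val ∧ min c.val d.val < max a.val b.val ∧
        max a.val b.val < max c.val d.val) ∨
       (min c.val d.val < min a.val b.val ∧ min a.val b.val < max c.val d.val ∧
        max c.val d.val < max a.val b.val)) := by
  have hmin : ∀ x y : Fin n, (min x y).val = min x.val y.val :=
    fun x y => Monotone.map_min (fun _ _ h => h)
  have hmax : ∀ x y : Fin n, (max x y).val = max x.val y.val :=
    fun x y => Monotone.map_max (fun _ _ h => h)
  rw [chordsCross, Fin.lt_def, Fin.lt_def, Fin.lt_def, Fin.lt_def, Fin.lt_def, Fin.lt_def,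
    hmin, hmin, hmax, hmax]

lemma val_one_of {n : ℕ} [NeZero n] (hn : 2 ≤ n) : (1 : Fin n).val = 1 := by
  rw [Fin.val_one', Nat.mod_eq_of_lt (by omega)]

lemma cycAdj_succ {n : ℕ} [NeZero n] (hn : 2 ≤ n) (z : Fin n) : cycAdj z (z + 1) := by
  have h1 := val_one_of hn
  constructor
  · intro h
    have h2 := congrArg Fin.val h
    rw [Fin.val_add, h1] at h2
    rcases Nat.lt_or_ge (z.val + 1) n with hlt | hge
    · rw [Nat.mod_eq_of_lt hlt] at h2; omega
    · have hz : z.val < n := z.isLt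
      have hz2 : z.val + 1 = n := by omega
      rw [hz2, Nat.mod_self] at h2; omega
  · left
    rw [Fin.val_add, h1]

/-- discrete IVT / flip lemma -/
lemma flipLemma (P Q : ℕ → Prop) : ∀ (d j : ℕ), P j → Q (j + d) →
    (∀ k, j ≤ k → k ≤ j + d → ¬(P k ∧ Q k)) →
    (∀ k, j ≤ k → k ≤ j + d → P k ∨ Q k) →
    ∃ j', j ≤ j' ∧ j' + 1 ≤ j + d ∧ P j' ∧ Q (j' + 1) := by
  intro d
  induction d with
  | zero => intro j hP hQ hnb _; exact absurd ⟨hP, by simpa using hQ⟩ (hnb j le_rfl le_rfl)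
  | succ d ih =>
    intro j hP hQ hnb hall
    by_cases hPd : P (j + d)
    · exact ⟨j + d, by omega, by omega, hPd, by rw [show j + d + 1 = j + (d+1) by omega]; exact hQ⟩
    · have hQd : Q (j + d) := (hall (j + d) (by omega) (by omega)).resolve_left hPd
      obtain ⟨j', h1, h2, h3, h4⟩ := ih j hP hQd
        (fun k hk hk' => hnb k hk (by omega)) (fun k hk hk' => hall k hk (by omega))
      exact ⟨j', h1, by omega, h3, h4⟩

lemma mod_shift_ne (n s t : ℕ) (hs : s < n) (ht1 : 1 ≤ t) (ht2 : t < n) : (s + t) % n ≠ s := by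
  rcases Nat.lt_or_ge (s + t) n with h | h
  · rw [Nat.mod_eq_of_lt h]; omega
  · have h2 : (s + t) % n = s + t - n := by
      rw [Nat.mod_eq_sub_mod h, Nat.mod_eq_of_lt (by omega)]
    omega

section Ham
variable {n : ℕ} [NeZero n]

lemma step1 (hn : 4 ≤ n) (f : Fin n → Fin n) (hinj : Function.Injective f)
    (hnc : ∀ i j : Fin n, i ≠ j → i ≠ j + 1 → i + 1 ≠ j → i + 1 ≠ j + 1 →
      ¬ chordsCross (f i) (f (i + 1)) (f j) (f (j + 1)))
    (i : Fin n) : cycAdj (f i) (f (i + 1)) := by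
  have hn2 : 2 ≤ n := by omega
  have h1v := val_one_of (n := n) hn2
  by_contra hcyc
  set a := f i with ha
  set b := f (i + 1) with hb
  have hii : i ≠ i + 1 := (cycAdj_succ hn2 i).1
  have hab : a ≠ b := fun h => hii (hinj h)
  have habv : a.val ≠ b.val := fun h => hab (Fin.ext h)
  rw [cycAdj] at hcyc
  push_neg at hcyc
  have hcyc' := hcyc hab
  obtain ⟨h₁, h₂⟩ := hcyc'
  set p := min a.val b.val with hp
  set q := max a.val b.val with hq
  have hpq : (p = a.val ∧ q = b.val) ∨ (p = b.val ∧ q = a.val) := by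
    rcases le_total a.val b.val with h | h
    · left; constructor <;> simp [hp, hq, min_eq_left h, max_eq_right h]
    · right; constructor <;> simp [hp, hq, min_eq_right h, max_eq_left h]
  have haL : a.val < n := a.isLt
  have hbL : b.val < n := b.isLt
  -- key numeric facts
  have key1 : a.val + 1 ≠ b.val := by
    intro h; apply h₁; rw [Nat.mod_eq_of_lt (by omega), h]
  have key2 : b.val + 1 ≠ a.val := by
    intro h; apply h₂; rw [Nat.mod_eq_of_lt (by omega), h]
  have key3 : ¬(a.val = n - 1 ∧ b.val = 0) := by
    rintro ⟨h3, h4⟩; apply h₁; rw [h3, h4, show n - 1 + 1 = n by omega, Nat.mod_self]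
  have key4 : ¬(b.val = n - 1 ∧ a.val = 0) := by
    rintro ⟨h3, h4⟩; apply h₂; rw [h3, h4, show n - 1 + 1 = n by omega, Nat.mod_self]
  have hq2 : p + 2 ≤ q := by omega
  have hside : 1 ≤ p ∨ q + 2 ≤ n := by omega
  have hqn : q < n := by omega
  -- the walk
  set w : ℕ → Fin n := fun j => f (i + (j : Fin n)) with hw
  have hw0 : w 0 = a := by simp [hw, ha]
  have hw1 : w 1 = b := by simp [hw, hb]
  have castval : ∀ j : ℕ, j < n → ((j : Fin n)).val = j := by
    intro j hj; rw [Fin.val_natCast, Nat.mod_eq_of_lt hj]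
  have huniq : ∀ j j' : ℕ, j < n → j' < n → w j = w j' → j = j' := by
    intro j j' hj hj' hww
    have := hinj hww
    have := add_left_cancel this
    have := congrArg Fin.val this
    rwa [castval j hj, castval j' hj'] at this
  have hpre : ∀ x : Fin n, ∃ j : ℕ, j < n ∧ w j = x := by
    intro x
    obtain ⟨k, hk⟩ := Finite.surjective_of_injective hinj x
    refine ⟨(k - i).val, (k - i).isLt, ?_⟩
    rw [hw]
    simp only [Fin.cast_val_eq_self]
    rw [add_sub_cancel, hk]
  -- interior vertices avoid a, b
  have hinterior : ∀ j : ℕ, 2 ≤ j → j ≤ n - 1 → (w j).val ≠ a.val ∧ (w j).val ≠ b.val := by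
    intro j hj2 hjn
    constructor
    · intro h
      have : w j = w 0 := by rw [hw0]; exact Fin.ext h
      have := huniq j 0 (by omega) (by omega) this; omega
    · intro h
      have : w j = w 1 := by rw [hw1]; exact Fin.ext h
      have := huniq j 1 (by omega) (by omega) this; omega
  set P : ℕ → Prop := fun j => p < (w j).val ∧ (w j).val < q with hP
  set Q : ℕ → Prop := fun j => (w j).val < p ∨ q < (w j).val with hQ
  have hPQ : ∀ j, 2 ≤ j → j ≤ n - 1 → P j ∨ Q j := by
    intro j hj2 hjn
    obtain ⟨hna, hnb⟩ := hinterior j hj2 hjn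
    simp only [hP, hQ]; omega
  have hnotboth : ∀ j, ¬(P j ∧ Q j) := by intro j; simp only [hP, hQ]; omega
  -- witness in A
  have hj1 : ∃ j1, 2 ≤ j1 ∧ j1 ≤ n - 1 ∧ P j1 := by
    obtain ⟨j1, hj1n, hj1w⟩ := hpre ⟨p + 1, by omega⟩
    have hval : (w j1).val = p + 1 := by rw [hj1w]
    have h2 : 2 ≤ j1 := by
      rcases Nat.lt_or_ge j1 2 with hlt | hge
      · interval_cases j1
        · rw [hw0] at hj1w; have := congrArg Fin.val hj1w; simp at this; omega
        · rw [hw1] at hj1w; have := congrArg Fin.val hj1w; simp at this; omega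
      · exact hge
    exact ⟨j1, h2, by omega, by simp only [hP]; omega⟩
  -- witness in B
  have hj2 : ∃ j2, 2 ≤ j2 ∧ j2 ≤ n - 1 ∧ Q j2 := by
    have : ∃ y : Fin n, y.val < p ∨ q < y.val := by
      rcases hside with hs | hs
      · exact ⟨⟨p - 1, by omega⟩, Or.inl (show p - 1 < p by omega)⟩
      · exact ⟨⟨q + 1, by omega⟩, Or.inr (show q < q + 1 by omega)⟩
    obtain ⟨y, hy⟩ := this
    obtain ⟨j2, hj2n, hj2w⟩ := hpre y
    have hval : (w j2).val = y.val := by rw [hj2w]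
    have h2 : 2 ≤ j2 := by
      rcases Nat.lt_or_ge j2 2 with hlt | hge
      · interval_cases j2
        · rw [hw0] at hj2w; have := congrArg Fin.val hj2w; omega
        · rw [hw1] at hj2w; have := congrArg Fin.val hj2w; omega
      · exact hge
    exact ⟨j2, h2, by omega, by simp only [hQ]; omega⟩
  obtain ⟨j1, hj1a, hj1b, hj1P⟩ := hj1
  obtain ⟨j2, hj2a, hj2b, hj2Q⟩ := hj2
  -- get adjacent flip
  have hflip : ∃ j', 2 ≤ j' ∧ j' + 1 ≤ n - 1 ∧
      ((P j' ∧ Q (j' + 1)) ∨ (Q j' ∧ P (j' + 1))) := by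
    rcases le_or_gt j1 j2 with hle | hlt
    · obtain ⟨j', ha1, ha2, ha3, ha4⟩ := flipLemma P Q (j2 - j1) j1 hj1P
        (by rwa [show j1 + (j2 - j1) = j2 by omega])
        (fun k _ _ => hnotboth k)
        (fun k hk hk' => hPQ k (by omega) (by omega))
      exact ⟨j', by omega, by omega, Or.inl ⟨ha3, ha4⟩⟩
    · obtain ⟨j', ha1, ha2, ha3, ha4⟩ := flipLemma Q P (j1 - j2) j2 hj2Q
        (by rwa [show j2 + (j1 - j2) = j1 by omega])
        (fun k _ _ hc => hnotboth k ⟨hc.2, hc.1⟩)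
        (fun k hk hk' => (hPQ k (by omega) (by omega)).symm)
      exact ⟨j', by omega, by omega, Or.inr ⟨ha3, ha4⟩⟩
  obtain ⟨j', hj'2, hj'n, hj'PQ⟩ := hflip
  -- set up the crossing edge
  set x : Fin n := i + ((j' : ℕ) : Fin n) with hx
  have hxval : x + 1 = i + (((j' + 1 : ℕ)) : Fin n) := by
    rw [hx, Nat.cast_add, Nat.cast_one, add_assoc]
  have hfx : f x = w j' := rfl
  have hfx1 : f (x + 1) = w (j' + 1) := by rw [hxval]
  have hcj : ((j' : ℕ) : Fin n).val = j' := castval j' (by omega)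
  have hcj1 : (((j' + 1 : ℕ)) : Fin n).val = j' + 1 := castval (j' + 1) (by omega)
  -- distinctness
  have hxv : x.val = (i.val + j') % n := by rw [hx, Fin.val_add, hcj]
  have hxv1 : (x + 1).val = (i.val + (j' + 1)) % n := by
    rw [hxval, Fin.val_add, hcj1]
  have d1 : i ≠ x := by
    intro h
    have h2 := congrArg Fin.val h
    rw [hxv] at h2
    exact mod_shift_ne n i.val j' i.isLt (by omega) (by omega) h2.symm
  have d2 : i ≠ x + 1 := by
    intro h
    have h2 := congrArg Fin.val h
    rw [hxv1] at h2
    exact mod_shift_ne n i.val (j' + 1) i.isLt (by omega) (by omega) h2.symm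
  have d3 : i + 1 ≠ x := by
    intro h
    rw [hx] at h
    have h2 : (1 : Fin n) = ((j' : ℕ) : Fin n) := add_left_cancel h
    have h3 := congrArg Fin.val h2
    rw [hcj, h1v] at h3; omega
  have d4 : i + 1 ≠ x + 1 := fun h => d1 (add_right_cancel h)
  -- crossing
  apply hnc i x d1 d2 d3 d4
  rw [← ha, ← hb, hfx, hfx1, chordsCross_iff]
  rcases hj'PQ with ⟨hP', hQ'⟩ | ⟨hQ', hP'⟩
  · simp only [hP] at hP'; simp only [hQ] at hQ'
    rw [← hp, ← hq]; omega
  · simp only [hP] at hP'; simp only [hQ] at hQ'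
    rw [← hp, ← hq]; omega
end Ham

lemma add_nat_ne {n : ℕ} [NeZero n] (i : Fin n) (t : ℕ) (h1 : 1 ≤ t) (h2 : t < n) :
    i + (t : Fin n) ≠ i := by
  intro h
  have h3 := congrArg Fin.val h
  rw [Fin.val_add, Fin.val_natCast, Nat.mod_eq_of_lt h2] at h3
  exact mod_shift_ne n i.val t i.isLt h1 h2 h3

lemma two_cast {n : ℕ} [NeZero n] (i : Fin n) : i + 1 + 1 = i + ((2 : ℕ) : Fin n) := by
  have e : ((2 : ℕ) : Fin n) = 1 + 1 := by
    rw [show (2 : ℕ) = 1 + 1 by rfl, Nat.cast_add, Nat.cast_one]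
  rw [e, ← add_assoc]

lemma affine {n : ℕ} [NeZero n] (hn : 4 ≤ n) (f : Fin n → Fin n)
    (hinj : Function.Injective f)
    (hnc : ∀ i j : Fin n, i ≠ j → i ≠ j + 1 → i + 1 ≠ j → i + 1 ≠ j + 1 →
      ¬ chordsCross (f i) (f (i + 1)) (f j) (f (j + 1))) :
    ∃ t : Fin n, (∀ j : Fin n, f j = t + j) ∨ (∀ j : Fin n, f j = t - j) := by
  have hn2 : 2 ≤ n := by omega
  have h1v := val_one_of (n := n) hn2
  have hstep : ∀ i : Fin n, f (i + 1) = f i + 1 ∨ f (i + 1) = f i - 1 := by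
    intro i
    obtain ⟨hne, hor⟩ := step1 hn f hinj hnc i
    rcases hor with h | h
    · left
      apply Fin.ext
      rw [Fin.val_add, h1v, h]
    · right
      have : f (i + 1) + 1 = f i := by
        apply Fin.ext
        rw [Fin.val_add, h1v, h]
      rw [← this, add_sub_cancel_right]
  have hii2 : ∀ i : Fin n, i + 1 + 1 ≠ i := by
    intro i
    rw [two_cast]
    exact add_nat_ne i 2 (by omega) (by omega)
  have hprop : ∀ i : Fin n, f (i + 1) = f i + 1 → f (i + 1 + 1) = f (i + 1) + 1 := by
    intro i h
    rcases hstep (i + 1) with h2 | h2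
    · exact h2
    · exfalso
      have h3 : f (i + 1 + 1) = f i := by rw [h2, h, add_sub_cancel_right]
      exact hii2 i (hinj h3)
  have hprop' : ∀ i : Fin n, f (i + 1) = f i - 1 → f (i + 1 + 1) = f (i + 1) - 1 := by
    intro i h
    rcases hstep (i + 1) with h2 | h2
    · exfalso
      have h3 : f (i + 1 + 1) = f i := by rw [h2, h, sub_add_cancel]
      exact hii2 i (hinj h3)
    · exact h2
  refine ⟨f 0, ?_⟩
  rcases hstep 0 with h0 | h0
  · left
    have hall : ∀ k : ℕ, f ((k : Fin n) + 1) = f (k : Fin n) + 1 := by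
      intro k
      induction k with
      | zero => simpa using h0
      | succ k ih =>
        have h2 := hprop (k : Fin n) ih
        rwa [Nat.cast_add, Nat.cast_one]
    have hval : ∀ k : ℕ, f (k : Fin n) = f 0 + (k : Fin n) := by
      intro k
      induction k with
      | zero => simp
      | succ k ih =>
        rw [Nat.cast_add, Nat.cast_one, hall k, ih, add_assoc]
    intro j
    have := hval j.val
    rwa [Fin.cast_val_eq_self] at this
  · right
    have hall : ∀ k : ℕ, f ((k : Fin n) + 1) = f (k : Fin n) - 1 := by
      intro k
      induction k with
      | zero => simpa using h0
      | succ k ih =>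
        have h2 := hprop' (k : Fin n) ih
        rwa [Nat.cast_add, Nat.cast_one]
    have hval : ∀ k : ℕ, f (k : Fin n) = f 0 - (k : Fin n) := by
      intro k
      induction k with
      | zero => simp
      | succ k ih =>
        rw [Nat.cast_add, Nat.cast_one, hall k, ih, sub_sub]
    intro j
    have := hval j.val
    rwa [Fin.cast_val_eq_self] at this

-- new material
lemma noncross_sep {n : ℕ} {a b c d : Fin n} (h1 : a.val < b.val) (h2 : b.val < c.val)
    (h3 : c.val < d.val) : ¬ chordsCross a b c d := by
  rw [chordsCross_iff, min_eq_left (le_of_lt h1), max_eq_right (le_of_lt h1),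
    min_eq_left (le_of_lt h3), max_eq_right (le_of_lt h3)]
  omega

lemma chordsCross_comm {n : ℕ} (a b c d : Fin n) :
    chordsCross a b c d ↔ chordsCross c d a b := or_comm

lemma cycAdj_symm {n : ℕ} {a b : Fin n} (h : cycAdj a b) : cycAdj b a :=
  ⟨h.1.symm, h.2.symm⟩

theorem main_count {h n : ℕ} (hh : 2 ≤ h) (hn : 3 * h ^ 2 ≤ n)
    (G : SimpleGraph (Fin n)) (hU : UniversalFor G (Ofam h n)) :
    n ^ (2 * h) ≤ (16 * h) ^ (2 * h) * (2 * n * G.edgeSet.ncard ^ h) := by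
  classical
  have hsq : 3 * h * h ≤ n := by nlinarith
  have hn12 : 12 ≤ n := by nlinarith
  haveI : NeZero n := ⟨by omega⟩
  have hn2 : 2 ≤ n := by omega
  set m := n / h with hmdef
  set r := m / 4 with hrdef
  have hm3h : 3 * h ≤ m := (Nat.le_div_iff_mul_le (by omega)).2 (by nlinarith)
  have hmn : h * m ≤ n := by rw [mul_comm]; exact Nat.div_mul_le_self n h
  have hm6 : 6 ≤ m := by omega
  have hr : 2 * r + 1 ≤ m := by omega
  have hr1 : 1 ≤ r := by omega
  have hm4r : m ≤ 4 * r + 3 := by omega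
  have hn16 : n ≤ 16 * h * r := by
    have h1 : h * m + n % h = n := by rw [hmdef]; exact Nat.div_add_mod n h
    have h2 : n % h < h := Nat.mod_lt n (by omega)
    have h3 : h * m ≤ h * (4 * r + 3) := Nat.mul_le_mul_left h hm4r
    have h4 : h * (4 * r + 3) = 4 * (h * r) + 3 * h := by ring
    have h5 : h ≤ h * r := Nat.le_mul_of_pos_right h (by omega)
    have h6 : 16 * h * r = 16 * (h * r) := by ring
    omega
  -- block bound
  have hblock : ∀ (i : Fin h) (v : ℕ), v < m → i.val * m + v < n := by
    intro i v hv
    have h1 : i.val + 1 ≤ h := i.isLt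
    have h2 : (i.val + 1) * m ≤ h * m := Nat.mul_le_mul_right m h1
    have h3 : i.val * m + m = (i.val + 1) * m := by ring
    omega
  have hblocksep : ∀ (i i' : Fin h) (v v' : ℕ), v < m → v' < m →
      i.val * m + v = i'.val * m + v' → i = i' := by
    intro i i' v v' hv hv' heq
    rcases lt_trichotomy i.val i'.val with hlt | he | hlt
    · exfalso
      have h2 : (i.val + 1) * m ≤ i'.val * m := Nat.mul_le_mul_right m (by omega)
      have h3 : i.val * m + m = (i.val + 1) * m := by ring
      omega
    · exact Fin.ext he
    · exfalso
      have h2 : (i'.val + 1) * m ≤ i.val * m := Nat.mul_le_mul_right m (by omega)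
      have h3 : i'.val * m + m = (i'.val + 1) * m := by ring
      omega
  -- block ordering
  have hblocklt : ∀ (i i' : Fin h) (v v' : ℕ), v < m → v' < m → i.val < i'.val →
      i.val * m + v < i'.val * m + v' := by
    intro i i' v v' hv hv' hlt
    have h2 : (i.val + 1) * m ≤ i'.val * m := Nat.mul_le_mul_right m (by omega)
    have h3 : i.val * m + m = (i.val + 1) * m := by ring
    omega
  set A : (Fin h → Fin r × Fin r) → Fin h → Fin n := fun x i =>
    ⟨i.val * m + (x i).1.val, hblock i _ (lt_of_lt_of_le (x i).1.isLt (by omega))⟩ with hA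
  set B : (Fin h → Fin r × Fin r) → Fin h → Fin n := fun x i =>
    ⟨i.val * m + (r + 1 + (x i).2.val), hblock i _ (by have := (x i).2.isLt; omega)⟩ with hB
  have hAval : ∀ x i, (A x i).val = i.val * m + (x i).1.val := fun x i => rfl
  have hBval : ∀ x i, (B x i).val = i.val * m + (r + 1 + (x i).2.val) := fun x i => rfl
  have hAB : ∀ x i, (A x i).val < (B x i).val := by
    intro x i
    rw [hAval, hBval]
    have := (x i).1.isLt
    omega
  -- the chord family for a configuration x
  have hcfg : ∀ x : Fin h → Fin r × Fin r, ∃ (tt : Fin n) (sgn : Bool) (f : Fin n → Fin n),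
      (if sgn then (∀ j, f j = tt + j) else (∀ j, f j = tt - j)) ∧
      ∀ i : Fin h, G.Adj (f (A x i)) (f (B x i)) := by
    intro x
    set D : Finset (Fin n × Fin n) := Finset.image (fun i => (A x i, B x i)) Finset.univ with hD
    have hFinj : Function.Injective (fun i => (A x i, B x i)) := by
      intro i i' heq
      have h1 : A x i = A x i' := congrArg Prod.fst heq
      have h2 := congrArg Fin.val h1
      rw [hAval, hAval] at h2
      exact hblocksep i i' _ _ (lt_of_lt_of_le (x i).1.isLt (by omega))
        (lt_of_lt_of_le (x i').1.isLt (by omega)) h2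
    have hmemD : ∀ p ∈ D, ∃ i : Fin h, p = (A x i, B x i) := by
      intro p hp
      rw [hD, Finset.mem_image] at hp
      obtain ⟨i, _, hi⟩ := hp
      exact ⟨i, hi.symm⟩
    have hDirr : ∀ p ∈ D, p.1 ≠ p.2 := by
      intro p hp
      obtain ⟨i, rfl⟩ := hmemD p hp
      intro hc
      have hv : (A x i).val = (B x i).val := congrArg Fin.val hc
      have := hAB x i
      omega
    -- the graph H
    set H : SimpleGraph (Fin n) :=
      { Adj := fun u v => cycAdj u v ∨ (u, v) ∈ D ∨ (v, u) ∈ D,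
        symm := by
          constructor
          intro u v hv
          rcases hv with hc | hc | hc
          · exact Or.inl (cycAdj_symm hc)
          · exact Or.inr (Or.inr hc)
          · exact Or.inr (Or.inl hc)
        loopless := by
          constructor
          intro u hu
          rcases hu with hc | hc | hc
          · exact hc.1 rfl
          · exact hDirr _ hc rfl
          · exact hDirr _ hc rfl } with hH
    have hHmem : H ∈ Ofam h n := by
      refine ⟨Equiv.refl _, D, ?_, ?_, ?_, ?_⟩
      · rw [hD, Finset.card_image_of_injective _ hFinj, Finset.card_univ, Fintype.card_fin]
      · intro p hp
        obtain ⟨i, rfl⟩ := hmemD p hp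
        have hab := hAB x i
        have haval := hAval x i
        have hbval := hBval x i
        have hx2 := (x i).2.isLt
        have hx1 := (x i).1.isLt
        have hBn : (B x i).val < n := (B x i).isLt
        have h2m : 2 * m ≤ n := le_trans (Nat.mul_le_mul_right m hh) hmn
        refine ⟨fun hc => by
          have hv : (A x i).val = (B x i).val := congrArg Fin.val hc; omega, ?_⟩
        rintro ⟨-, hc | hc⟩
        · have hc' : ((A x i).val + 1) % n = (B x i).val := hc
          rw [Nat.mod_eq_of_lt (by omega)] at hc'
          omega
        · have hc' : ((B x i).val + 1) % n = (A x i).val := hc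
          rcases Nat.lt_or_ge ((B x i).val + 1) n with hlt | hge
          · rw [Nat.mod_eq_of_lt hlt] at hc'; omega
          · have heq : (B x i).val + 1 = n := by omega
            rw [heq, Nat.mod_self] at hc'
            omega
      · intro p hp q hq hpq
        obtain ⟨i, rfl⟩ := hmemD p hp
        obtain ⟨i', rfl⟩ := hmemD q hq
        have hii : i ≠ i' := fun hc => hpq (by rw [hc])
        have hx1 := (x i).1.isLt
        have hx1' := (x i').1.isLt
        have hx2 := (x i).2.isLt
        have hx2' := (x i').2.isLt
        have hab := hAB x i
        have hab' := hAB x i'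
        rcases lt_or_gt_of_ne (fun hc : i.val = i'.val => hii (Fin.ext hc)) with hlt | hlt
        · have o1 : (B x i).val < (A x i').val := by
            rw [hBval, hAval]; exact hblocklt i i' _ _ (by omega) (by omega) hlt
          exact ⟨fun hc => by
              have hv : (A x i).val = (A x i').val := congrArg Fin.val hc; omega,
            fun hc => by
              have hv : (A x i).val = (B x i').val := congrArg Fin.val hc; omega,
            fun hc => by
              have hv : (B x i).val = (A x i').val := congrArg Fin.val hc; omega,
            fun hc => by
              have hv : (B x i).val = (B x i').val := congrArg Fin.val hc; omega,
            noncross_sep hab o1 hab'⟩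
        · have o1 : (B x i').val < (A x i).val := by
            rw [hBval, hAval]; exact hblocklt i' i _ _ (by omega) (by omega) hlt
          exact ⟨fun hc => by
              have hv : (A x i).val = (A x i').val := congrArg Fin.val hc; omega,
            fun hc => by
              have hv : (A x i).val = (B x i').val := congrArg Fin.val hc; omega,
            fun hc => by
              have hv : (B x i).val = (A x i').val := congrArg Fin.val hc; omega,
            fun hc => by
              have hv : (B x i).val = (B x i').val := congrArg Fin.val hc; omega,
            fun hc => (noncross_sep hab' o1 hab) ((chordsCross_comm _ _ _ _).1 hc)⟩
      · intro u v; exact Iff.rfl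
    obtain ⟨f, hf⟩ := hU H hHmem
    obtain ⟨hfinj, hfadj, hfnc⟩ := hf
    have hnc : ∀ i j : Fin n, i ≠ j → i ≠ j + 1 → i + 1 ≠ j → i + 1 ≠ j + 1 →
        ¬ chordsCross (f i) (f (i + 1)) (f j) (f (j + 1)) := by
      intro i j d1 d2 d3 d4
      refine hfnc i (i + 1) j (j + 1) ?_ ?_ d1 d2 d3 d4
      · exact Or.inl (cycAdj_succ hn2 i)
      · exact Or.inl (cycAdj_succ hn2 j)
    obtain ⟨t, ht⟩ := affine (by omega) f hfinj hnc
    have hadj : ∀ i : Fin h, G.Adj (f (A x i)) (f (B x i)) := by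
      intro i
      apply hfadj
      exact Or.inr (Or.inl (Finset.mem_image_of_mem _ (Finset.mem_univ i)))
    by_cases hplus : ∀ j : Fin n, f j = t + j
    · exact ⟨t, true, f, by simpa using hplus, hadj⟩
    · have hminus : ∀ j : Fin n, f j = t - j := ht.resolve_left hplus
      exact ⟨t, false, f, by simpa using hminus, hadj⟩
  choose tt sgn ff hsgn hadj using hcfg
  haveI : Fintype ↥G.edgeSet := Fintype.ofFinite _
  set Φ : (Fin h → Fin r × Fin r) → Fin n × Bool × (Fin h → ↥G.edgeSet) := fun x =>
    (tt x, sgn x, fun i => ⟨s(ff x (A x i), ff x (B x i)), (G.mem_edgeSet).2 (hadj x i)⟩)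
    with hΦ
  have hΦinj : Function.Injective Φ := by
    intro x y hxy
    rw [hΦ] at hxy
    simp only [Prod.mk.injEq] at hxy
    obtain ⟨h1, h2, h3⟩ := hxy
    -- the two embeddings agree
    have hfeq : ∀ j : Fin n, ff x j = ff y j := by
      have hsx := hsgn x
      have hsy := hsgn y
      rw [← h2] at hsy
      cases hb : sgn x
      · rw [hb] at hsx hsy
        simp at hsx hsy
        intro j; rw [hsx j, hsy j, h1]
      · rw [hb] at hsx hsy
        simp at hsx hsy
        intro j; rw [hsx j, hsy j, h1]
    have hFinj : Function.Injective (ff x) := by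
      have hsx := hsgn x
      cases hb : sgn x
      · rw [hb] at hsx; simp at hsx
        intro u v huv
        rw [hsx u, hsx v] at huv
        exact sub_right_injective huv
      · rw [hb] at hsx; simp at hsx
        intro u v huv
        rw [hsx u, hsx v] at huv
        exact add_left_cancel huv
    funext i
    have h3i := congrFun h3 i
    have h3i' := congrArg Subtype.val h3i
    simp only at h3i'
    rw [← hfeq (A y i), ← hfeq (B y i)] at h3i'
    rw [Sym2.eq_iff] at h3i'
    have hABi : A x i = A y i ∧ B x i = B y i := by
      rcases h3i' with ⟨e1, e2⟩ | ⟨e1, e2⟩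
      · exact ⟨hFinj e1, hFinj e2⟩
      · exfalso
        have e1' := congrArg Fin.val (hFinj e1)
        have e2' := congrArg Fin.val (hFinj e2)
        have := hAB x i
        have := hAB y i
        omega
    have hv1 := congrArg Fin.val hABi.1
    have hv2 := congrArg Fin.val hABi.2
    rw [hAval, hAval] at hv1
    rw [hBval, hBval] at hv2
    have : (x i).1 = (y i).1 := Fin.ext (by omega)
    have : (x i).2 = (y i).2 := Fin.ext (by omega)
    exact Prod.ext ‹(x i).1 = (y i).1› ‹(x i).2 = (y i).2›
  have hcard := Fintype.card_le_of_injective Φ hΦinj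
  have hcardT : Fintype.card (Fin h → Fin r × Fin r) = (r * r) ^ h := by
    simp [Fintype.card_fun]
  have hcardTgt : Fintype.card (Fin n × Bool × (Fin h → ↥G.edgeSet)) =
      n * (2 * (Fintype.card ↥G.edgeSet) ^ h) := by
    simp [Fintype.card_fun]
  have hE : Fintype.card ↥G.edgeSet = G.edgeSet.ncard := by
    rw [Set.ncard_eq_toFinset_card', Set.toFinset_card]
  rw [hcardT, hcardTgt, hE] at hcard
  -- final chain
  calc n ^ (2 * h) ≤ (16 * h * r) ^ (2 * h) := Nat.pow_le_pow_left hn16 _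
    _ = (16 * h) ^ (2 * h) * r ^ (2 * h) := by rw [mul_pow]
    _ = (16 * h) ^ (2 * h) * (r * r) ^ h := by
        rw [show (r * r) ^ h = r ^ (2 * h) by rw [← pow_two, ← pow_mul]]
    _ ≤ (16 * h) ^ (2 * h) * (n * (2 * G.edgeSet.ncard ^ h)) :=
        Nat.mul_le_mul_left _ hcard
    _ = (16 * h) ^ (2 * h) * (2 * n * G.edgeSet.ncard ^ h) := by ring

/-- For every `h ≥ 2` and `n ≥ 3h²`, every `n`-vertex convex geometric graph that is
universal for `O_h(n)` has at least `c_h · n^(2-1/h)` edges. -/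
theorem stmt_4 (h : ℕ) (hh : 2 ≤ h) :
    ∃ c : ℝ, 0 < c ∧ ∀ n : ℕ, 3 * h ^ 2 ≤ n →
      ∀ G : SimpleGraph (Fin n), UniversalFor G (Ofam h n) →
        c * (n : ℝ) ^ ((2 : ℝ) - 1 / (h : ℝ)) ≤ (G.edgeSet.ncard : ℝ) := by
  have hh1 : 1 ≤ h := by omega
  have hh0 : (0:ℝ) < (h:ℝ) := by exact_mod_cast (by omega : 0 < h)
  have hh1R : (1:ℝ) ≤ (h:ℝ) := by exact_mod_cast hh1
  set K : ℝ := (16 * (h:ℝ)) ^ (2 * h) with hK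
  have hK1 : (1:ℝ) ≤ K := one_le_pow₀ (by linarith)
  have hK0 : (0:ℝ) < 2 * K := by linarith
  refine ⟨(2 * K)⁻¹, by positivity, ?_⟩
  intro n hn G hU
  have hmain := main_count hh hn G hU
  set E := G.edgeSet.ncard with hE
  have hn12 : 12 ≤ n := by nlinarith
  have hN0 : (0:ℝ) < (n:ℝ) := by exact_mod_cast (by omega : 0 < n)
  have hE0 : (0:ℝ) ≤ (E:ℝ) := Nat.cast_nonneg E
  -- cast the main inequality to ℝ
  have hmainR : ((n:ℝ)) ^ (2 * h) ≤ K * (2 * (n:ℝ) * (E:ℝ) ^ h) := by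
    rw [hK]
    exact_mod_cast hmain
  -- divide by n
  have hdiv : ((n:ℝ)) ^ (2 * h - 1) ≤ 2 * K * (E:ℝ) ^ h := by
    have hsplit : ((n:ℝ)) ^ (2 * h) = (n:ℝ) * (n:ℝ) ^ (2 * h - 1) := by
      rw [← pow_succ']
      congr 1
      omega
    rw [hsplit] at hmainR
    have h2 : (n:ℝ) * (n:ℝ) ^ (2 * h - 1) ≤ (n:ℝ) * (2 * K * (E:ℝ) ^ h) := by
      calc (n:ℝ) * (n:ℝ) ^ (2 * h - 1) ≤ K * (2 * (n:ℝ) * (E:ℝ) ^ h) := hmainR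
        _ = (n:ℝ) * (2 * K * (E:ℝ) ^ h) := by ring
    exact le_of_mul_le_mul_left h2 hN0
  have hc1 : (2 * K)⁻¹ ≤ 1 := by
    rw [inv_le_one_iff₀]; right; linarith
  have hc0 : (0:ℝ) ≤ (2 * K)⁻¹ := by positivity
  -- rpow computation
  have hNpow : ((n:ℝ) ^ ((2:ℝ) - 1 / (h:ℝ))) ^ h = (n:ℝ) ^ (2 * h - 1) := by
    rw [← Real.rpow_natCast ((n:ℝ) ^ ((2:ℝ) - 1 / (h:ℝ))) h,
      ← Real.rpow_mul (le_of_lt hN0)]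
    rw [show ((2:ℝ) - 1 / (h:ℝ)) * (h:ℝ) = ((2 * h - 1 : ℕ) : ℝ) by
      push_cast [Nat.cast_sub (by omega : 1 ≤ 2 * h)]
      field_simp]
    rw [Real.rpow_natCast]
  -- final comparison via h-th powers
  apply le_of_pow_le_pow_left₀ (show h ≠ 0 by omega) hE0
  rw [mul_pow, hNpow]
  calc (2 * K)⁻¹ ^ h * (n:ℝ) ^ (2 * h - 1)
      ≤ (2 * K)⁻¹ * (n:ℝ) ^ (2 * h - 1) := by
        apply mul_le_mul_of_nonneg_right _ (by positivity)
        exact pow_le_of_le_one hc0 hc1 (by omega)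
    _ ≤ (E:ℝ) ^ h := by
        rw [inv_mul_le_iff₀ hK0]
        exact hdiv
end

section
/- Let n ∈ ℕ and let S = {0, 1, …, ⌊√n⌋ − 1} ∪ {i·⌊√n⌋ : 1 ≤ i ≤ ⌊√n⌋}. Then for every integer d with 1 ≤ d ≤ ⌊n/2⌋, there exist a, b ∈ S with b − a = d. -/
/-- `S = {0,…,⌊√n⌋−1} ∪ {i·⌊√n⌋ : 1 ≤ i ≤ ⌊√n⌋}`. -/
def sqrtSet (n : ℕ) : Finset ℕ :=
  Finset.range (Nat.sqrt n) ∪ (Finset.Icc 1 (Nat.sqrt n)).image (fun i => i * Nat.sqrt n)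

/-- For every `1 ≤ d ≤ ⌊n/2⌋` there are `a, b ∈ S` with `b - a = d`. -/
theorem stmt_6 (n : ℕ) (hn : 0 < n) (d : ℕ) (hd1 : 1 ≤ d) (hd2 : d ≤ n / 2) :
    ∃ a ∈ sqrtSet n, ∃ b ∈ sqrtSet n, a + d = b := by
  set s := Nat.sqrt n with hs
  have hs1 : 1 ≤ s := Nat.sqrt_pos.mpr hn
  have hle : s * s ≤ n := by simpa [pow_two] using Nat.sqrt_le' n
  have hlt : n < (s + 1) * (s + 1) := by simpa [pow_two] using Nat.lt_succ_sqrt' n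
  have h2 : 2 * d ≤ n := by omega
  have hds : d ≤ s * s := by nlinarith
  set q := (d - 1) / s with hq
  have hq1 : q * s ≤ d - 1 := Nat.div_mul_le_self _ _
  have hq2 : d - 1 < (q + 1) * s := by
    have : (d - 1) / s < q + 1 := Nat.lt_succ_self _
    exact (Nat.div_lt_iff_lt_mul hs1).mp this
  have hqs : q + 1 ≤ s := by
    by_contra h
    push_neg at h
    have : s * s ≤ q * s := Nat.mul_le_mul_right s (by omega)
    omega
  have hexp : (q + 1) * s = q * s + s := by ring
  refine ⟨(q + 1) * s - d, ?_, (q + 1) * s, ?_, by rw [hexp]; omega⟩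
  · refine Finset.mem_union_left _ (Finset.mem_range.mpr ?_)
    rw [hexp]
    omega
  · refine Finset.mem_union_right _ (Finset.mem_image.mpr ⟨q + 1, ?_, rfl⟩)
    exact Finset.mem_Icc.mpr ⟨Nat.le_add_left 1 q, hqs⟩
end

section
/- Define sequences of positive integers recursively: π_1 = (1), and for m = 2^h − 1 with h ≥ 2, π_m = π_{(m−1)/2} · (m) · π_{(m−1)/2} (concatenation with m in the middle); for general n, π_n is the prefix of length n of π_m for any m = 2^h − 1 with m ≥ n. Then for every n ∈ ℕ and every x with 1 ≤ x ≤ n, the maximum over any x consecutive elements of π_n is at least x. -/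
/-- The ruler sequence: `rulerList k` is `π_m` for `m = 2^(k+1) - 1`, defined by
`π_1 = (1)` and `π_m = π_{(m-1)/2} (m) π_{(m-1)/2}`. -/
def rulerList : ℕ → List ℕ
  | 0 => [1]
  | k + 1 => rulerList k ++ [2 ^ (k + 2) - 1] ++ rulerList k

/-- `π_n`: the prefix of length `n` of a long enough ruler sequence. -/
def pin (n : ℕ) : List ℕ := (rulerList n).take n

lemma ruler_len (k : ℕ) : (rulerList k).length = 2 ^ (k + 1) - 1 := by
  induction k with
  | zero => simp [rulerList]
  | succ k ih =>
    have h1 : 1 ≤ 2 ^ (k + 1) := Nat.one_le_two_pow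
    have h2 : 2 ^ (k + 2) = 2 * 2 ^ (k + 1) := by ring
    simp [rulerList, ih]
    omega

lemma ruler_getD (k : ℕ) : ∀ t j : ℕ, j < 2 ^ (k + 1) - 1 → 2 ^ t ∣ (j + 1) →
    2 ^ (t + 1) - 1 ≤ (rulerList k).getD j 0 := by
  induction k with
  | zero =>
    intro t j hj hd
    interval_cases j
    · have ht : 2 ^ t ∣ 1 := hd
      have : 2 ^ t = 1 := Nat.eq_one_of_dvd_one ht
      have ht0 : t = 0 := by
        by_contra h
        have : 2 ^ 1 ≤ 2 ^ t := Nat.pow_le_pow_right (by norm_num) (by omega)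
        omega
      subst ht0
      simp [rulerList]
  | succ k ih =>
    intro t j hj hd
    have h1 : 1 ≤ 2 ^ (k + 1) := Nat.one_le_two_pow
    have h2 : 2 ^ (k + 2) = 2 * 2 ^ (k + 1) := by ring
    have hlen : (rulerList k).length = 2 ^ (k + 1) - 1 := ruler_len k
    have hlen2 : (rulerList k ++ [2 ^ (k + 2) - 1]).length = 2 ^ (k + 1) := by
      simp [hlen]; omega
    show 2 ^ (t + 1) - 1 ≤ ((rulerList k ++ [2 ^ (k + 2) - 1]) ++ rulerList k).getD j 0
    rcases lt_trichotomy j (2 ^ (k + 1) - 1) with hlt | heq | hgt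
    · rw [List.getD_append _ _ _ _ (by omega), List.getD_append _ _ _ _ (by omega)]
      exact ih t j hlt hd
    · subst heq
      rw [List.getD_append _ _ _ _ (by omega),
        List.getD_append_right _ _ _ _ (by omega)]
      have he : 2 ^ (k + 1) - 1 - (rulerList k).length = 0 := by omega
      rw [he]
      simp only [List.getD_cons_zero]
      -- need t + 1 ≤ k + 2, i.e. t ≤ k + 1, since 2^t ∣ 2^(k+1)
      have hd' : 2 ^ t ∣ 2 ^ (k + 1) := by
        have : 2 ^ (k + 1) - 1 + 1 = 2 ^ (k + 1) := by omega
        rwa [this] at hd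
      have ht : t ≤ k + 1 := (Nat.pow_dvd_pow_iff_le_right (by norm_num)).mp hd'
      have : 2 ^ (t + 1) ≤ 2 ^ (k + 2) := Nat.pow_le_pow_right (by norm_num) (by omega)
      omega
    · rw [List.getD_append_right _ _ _ _ (by omega)]
      set j' := j - 2 ^ (k + 1) with hj'
      have hj'lt : j' < 2 ^ (k + 1) - 1 := by omega
      have ht : t ≤ k + 1 := by
        by_contra h
        have h2t : 2 ^ (k + 2) ≤ 2 ^ t := Nat.pow_le_pow_right (by norm_num) (by omega)
        have : 2 ^ t ≤ j + 1 := Nat.le_of_dvd (by omega) hd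
        omega
      have hd2 : 2 ^ t ∣ 2 ^ (k + 1) := Nat.pow_dvd_pow 2 ht
      have hd' : 2 ^ t ∣ (j' + 1) := by
        have : j + 1 = 2 ^ (k + 1) + (j' + 1) := by omega
        rw [this] at hd
        exact (Nat.dvd_add_right hd2).mp hd
      have := ih t j' hj'lt hd'
      rw [hlen2]
      exact this

/-- For every `1 ≤ x ≤ n`, any `x` consecutive elements of `π_n` contain an
element that is at least `x` (positions are 0-indexed). -/
theorem stmt_8 (n x : ℕ) (hx1 : 1 ≤ x) (hx2 : x ≤ n) (i : ℕ) (hi : i + x ≤ n) :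
    ∃ j, i ≤ j ∧ j < i + x ∧ x ≤ (pin n).getD j 0 := by
  set t := Nat.log 2 x with ht
  have h1 : 2 ^ t ≤ x := Nat.pow_log_le_self 2 (by omega)
  have h2 : x < 2 ^ (t + 1) := Nat.lt_pow_succ_log_self (by norm_num) x
  have hpos : 0 < 2 ^ t := Nat.pow_pos (n := t) (by norm_num)
  have hdm := Nat.div_add_mod i (2 ^ t)
  have hmlt : i % 2 ^ t < 2 ^ t := Nat.mod_lt i hpos
  set j := 2 ^ t * (i / 2 ^ t + 1) - 1 with hjdef
  have hjm : 2 ^ t * (i / 2 ^ t + 1) = 2 ^ t * (i / 2 ^ t) + 2 ^ t := by ring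
  have hij : i ≤ j := by omega
  have hjx : j < i + x := by omega
  refine ⟨j, hij, hjx, ?_⟩
  have hdvd : 2 ^ t ∣ (j + 1) := by
    have : j + 1 = 2 ^ t * (i / 2 ^ t + 1) := by omega
    rw [this]; exact Dvd.intro _ rfl
  have hjn : j < n := by omega
  have hn : n ≤ 2 ^ (n + 1) - 1 := by
    have := Nat.lt_two_pow_self (n := n)
    have : 2 ^ n ≤ 2 ^ (n + 1) := Nat.pow_le_pow_right (by norm_num) (by omega)
    omega
  have hjlen : j < 2 ^ (n + 1) - 1 := by omega
  have key := ruler_getD n t j hjlen hdvd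
  have hpin : (pin n).getD j 0 = (rulerList n).getD j 0 := by
    unfold pin
    unfold List.getD
    rw [List.getElem?_take_of_lt hjn]
  rw [hpin]
  omega
end

section
/- For every n ∈ ℕ, there exists a graph G on vertex set {1,…,n} with O(n log n) edges, arranged in convex position (edges drawn as chords of a circle), such that every n-vertex caterpillar admits a crossing-free straight-line embedding into G. -/
open Finset

/-- A caterpillar: a tree containing a path (the spine) that passes through every
vertex of degree at least two. -/
def IsCaterpillar {n : ℕ} (T : SimpleGraph (Fin n)) : Prop :=
  T.IsTree ∧ ∃ (s : ℕ) (u : Fin s → Fin n), Function.Injective u ∧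
    (∀ i j : Fin s, (i : ℕ) + 1 = (j : ℕ) → T.Adj (u i) (u j)) ∧
    ∀ v : Fin n, (∃ w x, w ≠ x ∧ T.Adj v w ∧ T.Adj v x) → ∃ i, u i = v

def pw2 (m : ℕ) : ℕ := 2 ^ (m.factorization 2)

def RR (m : ℕ) : ℕ := 4 * pw2 (m + 1)

def Gdef (n : ℕ) : SimpleGraph (Fin n) where
  Adj a b := a ≠ b ∧ Nat.dist a.val b.val ≤ max (RR a.val) (RR b.val)
  symm := by
    constructor
    rintro a b ⟨h1, h2⟩
    exact ⟨h1.symm, by rwa [Nat.dist_comm, max_comm]⟩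
  loopless := by constructor; intro a h; exact h.1 rfl

instance (n : ℕ) : DecidableRel (Gdef n).Adj := fun _ _ => instDecidableAnd

lemma pw2_dvd (m : ℕ) : pw2 m ∣ m := Nat.ordProj_dvd m 2

lemma pw2_le {m : ℕ} (hm : m ≠ 0) : pw2 m ≤ m := Nat.ordProj_le 2 hm

lemma le_pw2 {k m : ℕ} (hm : m ≠ 0) (h : 2 ^ k ∣ m) : 2 ^ k ≤ pw2 m := by
  have := (Nat.Prime.pow_dvd_iff_le_factorization Nat.prime_two hm).mp h
  exact Nat.pow_le_pow_right (by norm_num) this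

lemma sum_pw2_le (n : ℕ) : ∑ m ∈ range n, pw2 (m + 1) ≤ n * (Nat.log 2 n + 1) := by
  classical
  set L := Nat.log 2 n with hL
  have hmem : ∀ m ∈ range n, pw2 (m + 1) =
      ∑ t ∈ range (L + 1), if (m + 1).factorization 2 = t then 2 ^ t else 0 := by
    intro m hm
    rw [Finset.sum_ite_eq (range (L + 1)) ((m + 1).factorization 2) (fun t => 2 ^ t)]
    have h1 : 2 ^ ((m + 1).factorization 2) ≤ m + 1 := pw2_le (Nat.succ_ne_zero m)
    have h2 : m + 1 ≤ n := Finset.mem_range.mp hm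
    have : (m + 1).factorization 2 ≤ L := Nat.le_log_of_pow_le (by norm_num) (h1.trans h2)
    simp [Nat.lt_succ_of_le this, pw2]
  calc ∑ m ∈ range n, pw2 (m + 1)
      = ∑ m ∈ range n, ∑ t ∈ range (L + 1), (if (m + 1).factorization 2 = t then 2 ^ t else 0) :=
        Finset.sum_congr rfl hmem
    _ = ∑ t ∈ range (L + 1), ∑ m ∈ range n, (if (m + 1).factorization 2 = t then 2 ^ t else 0) :=
        Finset.sum_comm
    _ ≤ ∑ t ∈ range (L + 1), n := by
        apply Finset.sum_le_sum
        intro t _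
        have heq : ∑ m ∈ range n, (if (m + 1).factorization 2 = t then 2 ^ t else 0)
            = ∑ m ∈ {m ∈ range n | (m + 1).factorization 2 = t}, 2 ^ t := by
          rw [Finset.sum_filter]
        rw [heq, Finset.sum_const, smul_eq_mul]
        have hsub : {m ∈ range n | (m + 1).factorization 2 = t} ⊆
            {m ∈ range n | 2 ^ t ∣ m + 1} := by
          intro m hm
          simp only [Finset.mem_filter] at hm ⊢
          refine ⟨hm.1, ?_⟩
          rw [← hm.2]
          exact pw2_dvd (m + 1)
        calc ({m ∈ range n | (m + 1).factorization 2 = t}).card * 2 ^ t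
            ≤ ({m ∈ range n | 2 ^ t ∣ m + 1}).card * 2 ^ t :=
              Nat.mul_le_mul_right _ (Finset.card_le_card hsub)
          _ = n / 2 ^ t * 2 ^ t := by rw [Nat.card_multiples]
          _ ≤ n := Nat.div_mul_le_self n _
    _ = (L + 1) * n := by simp [mul_comm]
    _ = n * (L + 1) := mul_comm _ _

lemma dist_eq_sub {a b : ℕ} (h : a ≤ b) : Nat.dist a b = b - a := by
  unfold Nat.dist; omega

lemma card_edge (n : ℕ) : (Gdef n).edgeFinset.card ≤ 8 * (n * (Nat.log 2 n + 1)) := by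
  classical
  set Q1 : Finset (Fin n × Fin n) :=
    {p : Fin n × Fin n | p.1 < p.2 ∧ p.2.val - p.1.val ≤ RR p.1.val} with hQ1
  set Q2 : Finset (Fin n × Fin n) :=
    {p : Fin n × Fin n | p.1 < p.2 ∧ p.2.val - p.1.val ≤ RR p.2.val} with hQ2
  have hmain : (Gdef n).edgeFinset.card ≤ (Q1 ∪ Q2).card := by
    apply Finset.card_le_card_of_injOn (fun e => (Sym2.inf e, Sym2.sup e))
    · intro e he
      induction e with
      | _ a b =>
        rw [Finset.mem_coe, SimpleGraph.mem_edgeFinset, SimpleGraph.mem_edgeSet] at he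
        obtain ⟨hne, hdist⟩ := he
        simp only [Sym2.inf_mk, Sym2.sup_mk]
        have hlt : a ⊓ b < a ⊔ b := inf_lt_sup.mpr hne
        have hd : (a ⊔ b).val - (a ⊓ b).val = Nat.dist a.val b.val := by
          rcases le_total a b with h | h
          · rw [inf_eq_left.mpr h, sup_eq_right.mpr h, dist_eq_sub (Fin.le_def.mp h)]
          · rw [inf_eq_right.mpr h, sup_eq_left.mpr h, Nat.dist_comm,
              dist_eq_sub (Fin.le_def.mp h)]
        have hmax : max (RR (a ⊓ b).val) (RR (a ⊔ b).val) = max (RR a.val) (RR b.val) := by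
          rcases le_total a b with h | h
          · rw [inf_eq_left.mpr h, sup_eq_right.mpr h]
          · rw [inf_eq_right.mpr h, sup_eq_left.mpr h, max_comm]
        rw [Finset.mem_coe, Finset.mem_union]
        rcases le_total (RR (a ⊔ b).val) (RR (a ⊓ b).val) with h | h
        · left
          rw [hQ1, Finset.mem_filter]
          refine ⟨Finset.mem_univ _, hlt, ?_⟩
          show (a ⊔ b).val - (a ⊓ b).val ≤ RR (a ⊓ b).val
          rw [hd]
          exact hdist.trans (le_of_eq (hmax.symm.trans (max_eq_left h)))
        · right
          rw [hQ2, Finset.mem_filter]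
          refine ⟨Finset.mem_univ _, hlt, ?_⟩
          show (a ⊔ b).val - (a ⊓ b).val ≤ RR (a ⊔ b).val
          rw [hd]
          exact hdist.trans (le_of_eq (hmax.symm.trans (max_eq_right h)))
    · intro e _ e' _ h
      exact Sym2.sortEquiv.injective
        (Subtype.ext (show (e.inf, e.sup) = (e'.inf, e'.sup) from h))
  have hfib1 : Q1.card ≤ ∑ a : Fin n, RR a.val := by
    rw [Finset.card_eq_sum_card_fiberwise (f := fun p => p.1)
      (t := Finset.univ) (fun p _ => Finset.mem_univ _)]
    apply Finset.sum_le_sum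
    intro a _
    calc ({p ∈ Q1 | p.1 = a}).card ≤ (range (RR a.val)).card := by
          apply Finset.card_le_card_of_injOn (fun p => p.2.val - p.1.val - 1)
          · intro p hp
            simp only [Finset.mem_coe, hQ1, Finset.mem_filter, Finset.mem_univ, true_and] at hp
            obtain ⟨⟨hlt, hle⟩, hpa⟩ := hp
            have h1 : p.1.val < p.2.val := hlt
            rw [Finset.mem_coe, Finset.mem_range]
            subst hpa
            beta_reduce
            omega
          · intro p hp p' hp' hval
            simp only [Finset.mem_coe, hQ1, Finset.mem_filter, Finset.mem_univ, true_and] at hp hp'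
            obtain ⟨⟨hlt, _⟩, hpa⟩ := hp
            obtain ⟨⟨hlt', _⟩, hpa'⟩ := hp'
            have h1 : p.1.val < p.2.val := hlt
            have h2 : p'.1.val < p'.2.val := hlt'
            have e1 : p.1.val = a.val := congrArg Fin.val hpa
            have e2 : p'.1.val = a.val := congrArg Fin.val hpa'
            simp only at hval
            have : p.2 = p'.2 := Fin.ext (by omega)
            rw [Prod.ext_iff]
            exact ⟨hpa.trans hpa'.symm, this⟩
      _ = RR a.val := Finset.card_range _
  have hfib2 : Q2.card ≤ ∑ a : Fin n, RR a.val := by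
    rw [Finset.card_eq_sum_card_fiberwise (f := fun p => p.2)
      (t := Finset.univ) (fun p _ => Finset.mem_univ _)]
    apply Finset.sum_le_sum
    intro a _
    calc ({p ∈ Q2 | p.2 = a}).card ≤ (range (RR a.val)).card := by
          apply Finset.card_le_card_of_injOn (fun p => p.2.val - p.1.val - 1)
          · intro p hp
            simp only [Finset.mem_coe, hQ2, Finset.mem_filter, Finset.mem_univ, true_and] at hp
            obtain ⟨⟨hlt, hle⟩, hpa⟩ := hp
            have h1 : p.1.val < p.2.val := hlt
            rw [Finset.mem_coe, Finset.mem_range]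
            subst hpa
            beta_reduce
            omega
          · intro p hp p' hp' hval
            simp only [Finset.mem_coe, hQ2, Finset.mem_filter, Finset.mem_univ, true_and] at hp hp'
            obtain ⟨⟨hlt, _⟩, hpa⟩ := hp
            obtain ⟨⟨hlt', _⟩, hpa'⟩ := hp'
            have h1 : p.1.val < p.2.val := hlt
            have h2 : p'.1.val < p'.2.val := hlt'
            have e1 : p.2.val = a.val := congrArg Fin.val hpa
            have e2 : p'.2.val = a.val := congrArg Fin.val hpa'
            simp only at hval
            have : p.1 = p'.1 := Fin.ext (by omega)
            rw [Prod.ext_iff]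
            exact ⟨this, hpa.trans hpa'.symm⟩
      _ = RR a.val := Finset.card_range _
  have hsum : ∑ a : Fin n, RR a.val ≤ 4 * (n * (Nat.log 2 n + 1)) := by
    rw [Fin.sum_univ_eq_sum_range (fun m => RR m) n]
    calc ∑ m ∈ range n, RR m = 4 * ∑ m ∈ range n, pw2 (m + 1) := by
          simp [RR, Finset.mul_sum]
      _ ≤ 4 * (n * (Nat.log 2 n + 1)) := Nat.mul_le_mul_left 4 (sum_pw2_le n)
  calc (Gdef n).edgeFinset.card ≤ (Q1 ∪ Q2).card := hmain
    _ ≤ Q1.card + Q2.card := Finset.card_union_le _ _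
    _ ≤ 8 * (n * (Nat.log 2 n + 1)) := by omega


lemma dist_le_interval {t l x y : ℕ} (h1 : t ≤ x) (h2 : x ≤ t + l) (h3 : t ≤ y)
    (h4 : y ≤ t + l) : Nat.dist x y ≤ l := by
  unfold Nat.dist; omega

lemma fin_val_min {n : ℕ} (a b : Fin n) : (min a b).val = min a.val b.val := by
  rcases le_total a b with h | h
  · simp [min_eq_left h, Nat.min_eq_left (Fin.le_def.mp h)]
  · simp [min_eq_right h, Nat.min_eq_right (Fin.le_def.mp h)]

lemma fin_val_max {n : ℕ} (a b : Fin n) : (max a b).val = max a.val b.val := by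
  rcases le_total a b with h | h
  · simp [max_eq_right h, Nat.max_eq_right (Fin.le_def.mp h)]
  · simp [max_eq_left h, Nat.max_eq_left (Fin.le_def.mp h)]

lemma sep_noCross {n : ℕ} (a b c d : Fin n)
    (h : (max a b).val < (min c d).val ∨ (max c d).val < (min a b).val) :
    ¬ chordsCross a b c d := by
  intro hc
  have h1 : (min a b).val ≤ (max a b).val := by
    rw [fin_val_min, fin_val_max]; omega
  have h2 : (min c d).val ≤ (max c d).val := by
    rw [fin_val_min, fin_val_max]; omega
  rcases hc with ⟨hc1, hc2, hc3⟩ | ⟨hc1, hc2, hc3⟩ <;>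
    rcases h with h | h <;>
    simp only [Fin.lt_def] at hc1 hc2 hc3 <;> omega

lemma ruler_pick (t l : ℕ) : ∃ m, t ≤ m ∧ m ≤ t + l ∧ l + 2 ≤ 2 * pw2 (m + 1) := by
  set k := Nat.log 2 (l + 1) with hk
  set d := 2 ^ k with hd
  have hd1 : d ≤ l + 1 := Nat.pow_log_le_self 2 (Nat.succ_ne_zero l)
  have hd2 : l + 1 < 2 ^ (k + 1) := Nat.lt_pow_succ_log_self (by norm_num) _
  have hdpos : 0 < d := Nat.two_pow_pos k
  refine ⟨d * (t / d) + d - 1, ?_, ?_, ?_⟩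
  · have h1 := Nat.div_add_mod t d
    have h2 := Nat.mod_lt t hdpos
    omega
  · have h1 := Nat.div_add_mod t d
    omega
  · have hm1 : d * (t / d) + d - 1 + 1 = d * (t / d + 1) := by
      have : 0 < d * (t / d + 1) := by positivity
      ring_nf
      omega
    rw [hm1]
    have hdvd : 2 ^ k ∣ d * (t / d + 1) := ⟨t / d + 1, by rw [hd]⟩
    have hne : d * (t / d + 1) ≠ 0 := by positivity
    have := le_pw2 hne hdvd
    have h2k : 2 ^ (k + 1) = 2 * 2 ^ k := by ring
    omega

lemma exists_adj {n : ℕ} {T : SimpleGraph (Fin n)} (hc : T.Connected) (hn : 2 ≤ n)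
    (v : Fin n) : ∃ w, T.Adj v w := by
  have hcard : 1 < Fintype.card (Fin n) := by rw [Fintype.card_fin]; omega
  obtain ⟨w, hw⟩ := Fintype.exists_ne_of_one_lt_card hcard v
  obtain ⟨p⟩ := hc.preconnected v w
  cases p with
  | nil => exact absurd rfl hw
  | cons h _ => exact ⟨_, h⟩

lemma second_nbr {n : ℕ} {T : SimpleGraph (Fin n)} (hc : T.Connected) (hn : 3 ≤ n)
    {v w : Fin n} (hadj : T.Adj v w) (huniq : ∀ x, T.Adj v x → x = w) :
    ∃ y, y ≠ v ∧ T.Adj w y := by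
  classical
  have hcompl : (({v, w} : Finset (Fin n))ᶜ).Nonempty := by
    rw [← Finset.card_pos, Finset.card_compl]
    have : ({v, w} : Finset (Fin n)).card ≤ 2 := Finset.card_insert_le _ _ |>.trans (by simp)
    have : Fintype.card (Fin n) = n := Fintype.card_fin n
    omega
  obtain ⟨c, hcm⟩ := hcompl
  rw [Finset.mem_compl, Finset.mem_insert, Finset.mem_singleton] at hcm
  push_neg at hcm
  obtain ⟨hcv, hcw⟩ := hcm
  obtain ⟨p0⟩ := hc.preconnected v c
  have hp : p0.bypass.IsPath := SimpleGraph.Walk.bypass_isPath p0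
  set p := p0.bypass with hpdef
  clear_value p
  cases p with
  | nil => exact absurd rfl hcv.symm
  | cons h q =>
    rename_i x
    have hx : x = w := huniq x h
    subst hx
    cases q with
    | nil => exact absurd rfl hcw.symm
    | cons h2 q2 =>
      rename_i y
      refine ⟨y, ?_, h2⟩
      intro hyv
      have hnd := hp.support_nodup
      rw [SimpleGraph.Walk.support_cons, SimpleGraph.Walk.support_cons] at hnd
      exact (List.nodup_cons.mp hnd).1
        (List.mem_cons_of_mem _ (hyv ▸ SimpleGraph.Walk.start_mem_support q2))

lemma no_spine_absurd {n : ℕ} {T : SimpleGraph (Fin n)} (hn : 3 ≤ n) (htree : T.IsTree)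
    (hnone : ∀ v : Fin n, ¬ ∃ w x, w ≠ x ∧ T.Adj v w ∧ T.Adj v x) : False := by
  classical
  have hdeg : ∀ v, T.degree v ≤ 1 := by
    intro v
    by_contra h
    push_neg at h
    rw [← SimpleGraph.card_neighborFinset_eq_degree, Finset.one_lt_card] at h
    obtain ⟨a, ha, b, hb, hab⟩ := h
    rw [SimpleGraph.mem_neighborFinset] at ha hb
    exact hnone v ⟨a, b, hab, ha, hb⟩
  have hsum : ∑ v, T.degree v = 2 * T.edgeFinset.card :=
    SimpleGraph.sum_degrees_eq_twice_card_edges T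
  have hcard : T.edgeFinset.card + 1 = Fintype.card (Fin n) := htree.card_edgeFinset
  have hle : ∑ v, T.degree v ≤ Fintype.card (Fin n) * 1 := by
    rw [← Finset.card_univ, ← smul_eq_mul]
    exact Finset.sum_le_card_nsmul _ _ 1 (fun v _ => hdeg v)
  rw [Fintype.card_fin] at hcard hle
  omega

theorem embed (n s : ℕ) (hn : 3 ≤ n) (hs : 0 < s) (T : SimpleGraph (Fin n)) (htree : T.IsTree)
    (u : ℕ → Fin n)
    (uinj : ∀ i j, i < s → j < s → u i = u j → i = j)
    (upath : ∀ i, i + 1 < s → T.Adj (u i) (u (i + 1)))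
    (ucov : ∀ v : Fin n, (∃ w x, w ≠ x ∧ T.Adj v w ∧ T.Adj v x) → ∃ i, i < s ∧ u i = v) :
    ∃ f, IsPlaneEmb T (Gdef n) f := by
  classical
  have hconn : T.Connected := htree.isConnected
  -- neighbor function
  have hadj_ex : ∀ v, ∃ w, T.Adj v w := exists_adj hconn (by omega)
  set nbr : Fin n → Fin n := fun v => (hadj_ex v).choose with hnbrdef
  have hnbr : ∀ v, T.Adj v (nbr v) := fun v => (hadj_ex v).choose_spec
  -- spine finset
  set Sp : Finset (Fin n) := (range s).image u with hSpdef
  have hSp_mem : ∀ v, v ∈ Sp ↔ ∃ i, i < s ∧ u i = v := by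
    intro v
    simp [hSpdef, Finset.mem_image, Finset.mem_range]
  have hSpcard : Sp.card = s := by
    rw [hSpdef, Finset.card_image_of_injOn, Finset.card_range]
    intro i hi j hj hij
    exact uinj i j (Finset.mem_range.mp hi) (Finset.mem_range.mp hj) hij
  have hsn : s ≤ n := by
    have := Finset.card_le_card (Finset.subset_univ Sp)
    rwa [hSpcard, Finset.card_univ, Fintype.card_fin] at this
  -- uniqueness of neighbor for non-spine
  have huniq : ∀ v, v ∉ Sp → ∀ x, T.Adj v x → x = nbr v := by
    intro v hv x hx
    by_contra hne
    exact hv ((hSp_mem v).mpr (ucov v ⟨x, nbr v, hne, hx, hnbr v⟩))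
  have hnbrSp : ∀ v, v ∉ Sp → nbr v ∈ Sp := by
    intro v hv
    obtain ⟨y, hy1, hy2⟩ := second_nbr hconn hn (hnbr v)
      (fun x hx => (huniq v hv x hx))
    rw [hSp_mem]
    exact ucov (nbr v) ⟨v, y, fun h => hy1 h.symm, (hnbr v).symm, hy2⟩
  -- index functions
  set sidx : Fin n → ℕ := fun v => if h : ∃ i, i < s ∧ u i = v then h.choose else 0 with hsidxdef
  have hsidx : ∀ v, v ∈ Sp → sidx v < s ∧ u (sidx v) = v := by
    intro v hv
    rw [hSp_mem] at hv
    simp only [hsidxdef, dif_pos hv]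
    exact hv.choose_spec
  have hsidx_u : ∀ i, i < s → sidx (u i) = i := by
    intro i hi
    have h1 := hsidx (u i) ((hSp_mem _).mpr ⟨i, hi, rfl⟩)
    exact uinj _ _ h1.1 hi h1.2
  set idx : Fin n → ℕ := fun v => sidx (nbr v) with hidxdef
  have hidx : ∀ v, v ∉ Sp → idx v < s ∧ u (idx v) = nbr v := by
    intro v hv
    exact hsidx (nbr v) (hnbrSp v hv)
  -- edge classification
  set E1 : Finset (Sym2 (Fin n)) := (range (s - 1)).image (fun i => s(u i, u (i + 1))) with hE1def
  set E2 : Finset (Sym2 (Fin n)) := (univ.filter (· ∉ Sp)).image (fun v => s(v, nbr v)) with hE2def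
  have hmemE1 : ∀ e, e ∈ E1 ↔ ∃ i, i + 1 < s ∧ e = s(u i, u (i + 1)) := by
    intro e
    simp only [hE1def, Finset.mem_image, Finset.mem_range]
    constructor
    · rintro ⟨i, hi, rfl⟩; exact ⟨i, by omega, rfl⟩
    · rintro ⟨i, hi, rfl⟩; exact ⟨i, by omega, rfl⟩
  have hmemE2 : ∀ e, e ∈ E2 ↔ ∃ v, v ∉ Sp ∧ e = s(v, nbr v) := by
    intro e
    simp only [hE2def, Finset.mem_image, Finset.mem_filter, Finset.mem_univ, true_and]
    constructor
    · rintro ⟨v, hv, rfl⟩; exact ⟨v, hv, rfl⟩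
    · rintro ⟨v, hv, rfl⟩; exact ⟨v, hv, rfl⟩
  have hcard1 : E1.card = s - 1 := by
    rw [hE1def, Finset.card_image_of_injOn, Finset.card_range]
    intro i hi j hj hij
    rw [Finset.mem_coe, Finset.mem_range] at hi hj
    rcases Sym2.eq_iff.mp hij with ⟨h1, h2⟩ | ⟨h1, h2⟩
    · exact uinj i j (by omega) (by omega) h1
    · have e1 := uinj i (j + 1) (by omega) (by omega) h1
      have e2 := uinj (i + 1) j (by omega) (by omega) h2
      omega
  have hcard2 : E2.card = n - s := by
    rw [hE2def, Finset.card_image_of_injOn]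
    · rw [Finset.filter_not, Finset.card_sdiff_of_subset (Finset.filter_subset _ _)]
      rw [Finset.card_univ, Fintype.card_fin]
      congr 1
      rw [Finset.filter_mem_eq_inter, Finset.univ_inter, hSpcard]
    · intro v hv w hw hvw
      rw [Finset.mem_coe, Finset.mem_filter] at hv hw
      rcases Sym2.eq_iff.mp hvw with ⟨h1, h2⟩ | ⟨h1, h2⟩
      · exact h1
      · exact absurd (h1 ▸ hnbrSp w hw.2) hv.2
  have hdisj : Disjoint E1 E2 := by
    rw [Finset.disjoint_left]
    intro e he1 he2
    obtain ⟨i, hi, he⟩ := (hmemE1 e).mp he1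
    obtain ⟨v, hv, he'⟩ := (hmemE2 e).mp he2
    rcases Sym2.eq_iff.mp (he'.symm.trans he) with ⟨h1, h2⟩ | ⟨h1, h2⟩
    · exact hv ((hSp_mem v).mpr ⟨i, by omega, h1.symm⟩)
    · exact hv ((hSp_mem v).mpr ⟨i + 1, by omega, h1.symm⟩)
  have hsub : E1 ∪ E2 ⊆ T.edgeFinset := by
    intro e he
    rw [SimpleGraph.mem_edgeFinset]
    rcases Finset.mem_union.mp he with h | h
    · obtain ⟨i, hi, rfl⟩ := (hmemE1 e).mp h
      exact upath i hi
    · obtain ⟨v, hv, rfl⟩ := (hmemE2 e).mp h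
      exact hnbr v
  have hTcard : T.edgeFinset.card + 1 = n := by
    have := htree.card_edgeFinset
    rwa [Fintype.card_fin] at this
  have hedges : E1 ∪ E2 = T.edgeFinset := by
    apply Finset.eq_of_subset_of_card_le hsub
    rw [Finset.card_union_of_disjoint hdisj, hcard1, hcard2]
    omega
  have hclass : ∀ a b : Fin n, T.Adj a b → s(a, b) ∈ E1 ∪ E2 := by
    intro a b hab
    rw [hedges, SimpleGraph.mem_edgeFinset]
    exact hab
  -- leaves
  set Lv : ℕ → Finset (Fin n) := fun i => univ.filter (fun v => v ∉ Sp ∧ nbr v = u i) with hLvdef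
  set l : ℕ → ℕ := fun i => (Lv i).card with hldef
  set t : ℕ → ℕ := fun i => i + ∑ j ∈ range i, l j with htdef
  have htsucc : ∀ i, t (i + 1) = t i + l i + 1 := by
    intro i
    simp only [htdef, Finset.sum_range_succ]
    omega
  have htmono : ∀ i j, i ≤ j → t i ≤ t j := by
    intro i j hij
    simp only [htdef]
    have : ∑ x ∈ range i, l x ≤ ∑ x ∈ range j, l x :=
      Finset.sum_le_sum_of_subset (Finset.range_subset_range.mpr hij)
    omega
  have hLv_mem : ∀ i v, v ∈ Lv i ↔ v ∉ Sp ∧ nbr v = u i := by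
    intro i v
    simp [hLvdef]
  have hts : t s = n := by
    have hbi : univ.filter (· ∉ Sp) = (range s).biUnion Lv := by
      ext v
      simp only [Finset.mem_filter, Finset.mem_univ, true_and, Finset.mem_biUnion,
        Finset.mem_range]
      constructor
      · intro hv
        exact ⟨idx v, (hidx v hv).1, (hLv_mem _ v).mpr ⟨hv, (hidx v hv).2.symm⟩⟩
      · rintro ⟨i, hi, hvi⟩
        exact ((hLv_mem i v).mp hvi).1
    have hdisjLv : ∀ i ∈ range s, ∀ j ∈ range s, i ≠ j → Disjoint (Lv i) (Lv j) := by
      intro i hi j hj hij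
      rw [Finset.disjoint_left]
      intro v hvi hvj
      have h1 := (hLv_mem i v).mp hvi
      have h2 := (hLv_mem j v).mp hvj
      exact hij (uinj i j (Finset.mem_range.mp hi) (Finset.mem_range.mp hj)
        (h1.2 ▸ h2.2 ▸ rfl))
    have hsum : ∑ j ∈ range s, l j = n - s := by
      have := Finset.card_biUnion hdisjLv
      rw [← hbi] at this
      rw [hldef]
      rw [← this]
      rw [Finset.filter_not, Finset.card_sdiff_of_subset (Finset.filter_subset _ _)]
      rw [Finset.card_univ, Fintype.card_fin]
      congr 1
      rw [Finset.filter_mem_eq_inter, Finset.univ_inter, hSpcard]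
    simp only [htdef, hsum]
    omega
  have hblock : ∀ i, i < s → t i + l i < n := by
    intro i hi
    have h1 := htsucc i
    have h2 := htmono (i + 1) s hi
    omega
  -- choose spine positions
  have hqex : ∀ i : ℕ, ∃ m, t i ≤ m ∧ m ≤ t i + l i ∧ l i + 2 ≤ 2 * pw2 (m + 1) :=
    fun i => ruler_pick (t i) (l i)
  set q : ℕ → ℕ := fun i => (hqex i).choose with hqdef
  have hq1 : ∀ i, t i ≤ q i := fun i => (hqex i).choose_spec.1
  have hq2 : ∀ i, q i ≤ t i + l i := fun i => (hqex i).choose_spec.2.1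
  have hq3 : ∀ i, l i + 2 ≤ 2 * pw2 (q i + 1) := fun i => (hqex i).choose_spec.2.2
  have hqR : ∀ i, 2 * l i + 4 ≤ RR (q i) := by
    intro i
    have := hq3 i
    simp only [RR]
    omega
  -- rank of leaves
  set rk : Fin n → ℕ := fun v => ((Lv (idx v)).filter (· < v)).card with hrkdef
  have hrk_lt : ∀ v, v ∉ Sp → rk v < l (idx v) := by
    intro v hv
    have hvmem : v ∈ Lv (idx v) := (hLv_mem _ v).mpr ⟨hv, (hidx v hv).2.symm⟩
    have hsub2 : (Lv (idx v)).filter (· < v) ⊆ (Lv (idx v)).erase v := by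
      intro w hw
      rw [Finset.mem_filter] at hw
      exact Finset.mem_erase.mpr ⟨ne_of_lt hw.2, hw.1⟩
    have h1 := Finset.card_le_card hsub2
    rw [Finset.card_erase_of_mem hvmem] at h1
    have h2 : 0 < l (idx v) := Finset.card_pos.mpr ⟨v, hvmem⟩
    simp only [hrkdef, hldef] at *
    omega
  have hidx_of_mem : ∀ i v, i < s → v ∈ Lv i → idx v = i := by
    intro i v hi hv
    have h1 := (hLv_mem i v).mp hv
    have h2 := hidx v h1.1
    exact uinj _ _ h2.1 hi (h2.2.trans h1.2)
  have hrk_mono : ∀ i v w, i < s → v ∈ Lv i → w ∈ Lv i → v < w → rk v < rk w := by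
    intro i v w hi hv hw hvw
    have hiv : idx v = i := hidx_of_mem i v hi hv
    have hiw : idx w = i := hidx_of_mem i w hi hw
    simp only [hrkdef, hiv, hiw]
    apply Finset.card_lt_card
    rw [Finset.ssubset_iff_of_subset]
    · exact ⟨v, Finset.mem_filter.mpr ⟨hv, hvw⟩, fun hc => absurd (Finset.mem_filter.mp hc).2 (lt_irrefl v)⟩
    · intro x hx
      rw [Finset.mem_filter] at hx ⊢
      exact ⟨hx.1, hx.2.trans hvw⟩
  have hrk_inj : ∀ i v w, i < s → v ∈ Lv i → w ∈ Lv i → rk v = rk w → v = w := by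
    intro i v w hi hv hw hrw
    rcases lt_trichotomy v w with h | h | h
    · exact absurd hrw (Nat.ne_of_lt (hrk_mono i v w hi hv hw h))
    · exact h
    · exact absurd hrw.symm (Nat.ne_of_lt (hrk_mono i w v hi hw hv h))
  -- the position function
  set fN : Fin n → ℕ := fun v =>
    if v ∈ Sp then q (sidx v)
    else if t (idx v) + rk v < q (idx v) then t (idx v) + rk v else t (idx v) + rk v + 1
    with hfNdef
  have hfN_spine : ∀ i, i < s → fN (u i) = q i := by
    intro i hi
    have hmem : u i ∈ Sp := (hSp_mem _).mpr ⟨i, hi, rfl⟩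
    simp only [hfNdef, if_pos hmem, hsidx_u i hi]
  have hfN_leaf : ∀ v, v ∉ Sp →
      t (idx v) ≤ fN v ∧ fN v ≤ t (idx v) + l (idx v) ∧ fN v ≠ q (idx v) := by
    intro v hv
    have hr := hrk_lt v hv
    have h1 := hq1 (idx v)
    have h2 := hq2 (idx v)
    simp only [hfNdef, if_neg hv]
    split <;> omega
  have hfN_lt : ∀ v, fN v < n := by
    intro v
    by_cases hv : v ∈ Sp
    · have h := hsidx v hv
      have h1 := hq2 (sidx v)
      have h2 := hblock (sidx v) h.1
      simp only [hfNdef, if_pos hv]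
      omega
    · have h := hfN_leaf v hv
      have h2 := hblock (idx v) (hidx v hv).1
      omega
  set f : Fin n → Fin n := fun v => ⟨fN v, hfN_lt v⟩ with hfdef
  -- block index
  set bIdx : Fin n → ℕ := fun v => if v ∈ Sp then sidx v else idx v with hbIdxdef
  have hbIdx : ∀ v, bIdx v < s ∧ t (bIdx v) ≤ fN v ∧ fN v ≤ t (bIdx v) + l (bIdx v) := by
    intro v
    by_cases hv : v ∈ Sp
    · have h := hsidx v hv
      have h1 := hq1 (sidx v)
      have h2 := hq2 (sidx v)
      simp only [hbIdxdef, if_pos hv]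
      refine ⟨h.1, ?_, ?_⟩ <;> simp only [hfNdef, if_pos hv] <;> omega
    · have h := hfN_leaf v hv
      simp only [hbIdxdef, if_neg hv]
      exact ⟨(hidx v hv).1, h.1, h.2.1⟩
  have hb_unique : ∀ i j x, i < s → j < s → t i ≤ x → x ≤ t i + l i → t j ≤ x →
      x ≤ t j + l j → i = j := by
    intro i j x hi hj h1 h2 h3 h4
    by_contra hij
    rcases Nat.lt_or_ge i j with h | h
    · have := htsucc i
      have := htmono (i + 1) j h
      omega
    · have hji : j < i := by omega
      have := htsucc j
      have := htmono (j + 1) i hji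
      omega
  have hf_inj : Function.Injective f := by
    intro v w hvw
    have hfv : fN v = fN w := congrArg Fin.val hvw
    have hbv := hbIdx v
    have hbw := hbIdx w
    have hbeq : bIdx v = bIdx w := by
      apply hb_unique _ _ (fN v) hbv.1 hbw.1 hbv.2.1 hbv.2.2 (hfv ▸ hbw.2.1) (hfv ▸ hbw.2.2)
    by_cases hv : v ∈ Sp <;> by_cases hw : w ∈ Sp
    · have h1 := hsidx v hv
      have h2 := hsidx w hw
      have : sidx v = sidx w := by
        simpa only [hbIdxdef, if_pos hv, if_pos hw] using hbeq
      rw [← h1.2, ← h2.2, this]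
    · exfalso
      have h1 := hsidx v hv
      have h2 := hfN_leaf w hw
      have hiv : idx w = sidx v := by
        simpa only [hbIdxdef, if_pos hv, if_neg hw] using hbeq.symm
      have : fN v = q (sidx v) := by simp only [hfNdef, if_pos hv]
      rw [hiv] at h2
      exact h2.2.2 (by omega)
    · exfalso
      have h1 := hsidx w hw
      have h2 := hfN_leaf v hv
      have hiv : idx v = sidx w := by
        simpa only [hbIdxdef, if_neg hv, if_pos hw] using hbeq
      have : fN w = q (sidx w) := by simp only [hfNdef, if_pos hw]
      rw [hiv] at h2
      exact h2.2.2 (by omega)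
    · have hiv : idx v = idx w := by
        simpa only [hbIdxdef, if_neg hv, if_neg hw] using hbeq
      have hrk : rk v = rk w := by
        have e1 : fN v = if t (idx v) + rk v < q (idx v) then t (idx v) + rk v
            else t (idx v) + rk v + 1 := by simp only [hfNdef, if_neg hv]
        have e2 : fN w = if t (idx w) + rk w < q (idx w) then t (idx w) + rk w
            else t (idx w) + rk w + 1 := by simp only [hfNdef, if_neg hw]
        rw [hiv] at e1
        rw [e1, e2] at hfv
        split at hfv <;> split at hfv <;> omega
      have hvm : v ∈ Lv (idx w) := (hLv_mem _ v).mpr ⟨hv, hiv ▸ (hidx v hv).2.symm⟩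
      have hwm : w ∈ Lv (idx w) := (hLv_mem _ w).mpr ⟨hw, (hidx w hw).2.symm⟩
      exact hrk_inj (idx w) v w (hidx w hw).1 hvm hwm hrk
  -- adjacency preservation
  have hGadj : ∀ a b : Fin n, T.Adj a b → (Gdef n).Adj (f a) (f b) := by
    have key : ∀ a b : Fin n, s(a, b) ∈ E1 ∪ E2 → (Gdef n).Adj (f a) (f b) := by
      intro a b hab
      rcases Finset.mem_union.mp hab with h | h
      · obtain ⟨i, hi, heq⟩ := (hmemE1 _).mp h
        have hspine : (Gdef n).Adj (f (u i)) (f (u (i + 1))) := by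
          have e1 : fN (u i) = q i := hfN_spine i (by omega)
          have e2 : fN (u (i + 1)) = q (i + 1) := hfN_spine (i + 1) hi
          have hlt : q i < q (i + 1) := by
            have := hq2 i
            have := hq1 (i + 1)
            have := htsucc i
            omega
          constructor
          · intro hc
            have : fN (u i) = fN (u (i+1)) := congrArg Fin.val hc
            omega
          · show Nat.dist (f (u i)).val (f (u (i+1))).val ≤ _
            have hv1 : (f (u i)).val = q i := e1
            have hv2 : (f (u (i+1))).val = q (i + 1) := e2
            rw [hv1, hv2]
            have hd : Nat.dist (q i) (q (i + 1)) = q (i + 1) - q i := by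
              unfold Nat.dist; omega
            have hR1 := hqR i
            have hR2 := hqR (i + 1)
            have hb1 := hq2 (i + 1)
            have hb2 := hq1 i
            have hts' := htsucc i
            have hle1 : (RR (q i)) ≤ max (RR (q i)) (RR (q (i+1))) := le_max_left _ _
            have hle2 : (RR (q (i+1))) ≤ max (RR (q i)) (RR (q (i+1))) := le_max_right _ _
            rw [hv1, hv2] at *
            rw [hd]
            omega
        rcases Sym2.eq_iff.mp heq with ⟨h1, h2⟩ | ⟨h1, h2⟩
        · subst h1; subst h2; exact hspine
        · subst h1; subst h2; exact hspine.symm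
      · obtain ⟨v, hv, heq⟩ := (hmemE2 _).mp h
        have hleafadj : (Gdef n).Adj (f v) (f (nbr v)) := by
          have hiv := hidx v hv
          have e2 : fN (nbr v) = q (idx v) := by
            rw [← hiv.2]
            exact hfN_spine _ hiv.1
          have h2 := hfN_leaf v hv
          constructor
          · intro hc
            have : fN v = fN (nbr v) := congrArg Fin.val hc
            rw [e2] at this
            exact h2.2.2 this
          · show Nat.dist (f v).val (f (nbr v)).val ≤ _
            have hv1 : (f v).val = fN v := rfl
            have hv2 : (f (nbr v)).val = q (idx v) := e2
            rw [hv1, hv2]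
            have hdle : Nat.dist (fN v) (q (idx v)) ≤ l (idx v) :=
              dist_le_interval h2.1 h2.2.1 (hq1 _) (hq2 _)
            have hR := hqR (idx v)
            have hle : (RR (q (idx v))) ≤ max (RR (fN v)) (RR (q (idx v))) := le_max_right _ _
            omega
        rcases Sym2.eq_iff.mp heq with ⟨h1, h2⟩ | ⟨h1, h2⟩
        · subst h1; subst h2; exact hleafadj
        · subst h1; subst h2; exact hleafadj.symm
    intro a b hab
    exact key a b (hclass a b hab)
  -- descriptors for crossing-freeness
  have hdesc : ∀ a b : Fin n, T.Adj a b → ∃ i j, i ≤ j ∧ j ≤ i + 1 ∧ j < s ∧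
      t i ≤ fN a ∧ t i ≤ fN b ∧ fN a ≤ t j + l j ∧ fN b ≤ t j + l j ∧
      (u i = a ∨ u i = b) ∧ (j ≠ i → (u j = a ∨ u j = b)) := by
    intro a b hab
    rcases Finset.mem_union.mp (hclass a b hab) with h | h
    · obtain ⟨i, hi, heq⟩ := (hmemE1 _).mp h
      have e1 : fN (u i) = q i := hfN_spine i (by omega)
      have e2 : fN (u (i + 1)) = q (i + 1) := hfN_spine (i + 1) hi
      have b1 := hq1 i
      have b2 := hq2 i
      have b3 := hq1 (i + 1)
      have b4 := hq2 (i + 1)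
      have b5 := htsucc i
      have b6 := htmono i (i + 1) (by omega)
      refine ⟨i, i + 1, by omega, by omega, hi, ?_⟩
      rcases Sym2.eq_iff.mp heq with ⟨h1, h2⟩ | ⟨h1, h2⟩
      · subst h1; subst h2
        exact ⟨by omega, by omega, by omega, by omega, Or.inl rfl, fun _ => Or.inr rfl⟩
      · subst h1; subst h2
        exact ⟨by omega, by omega, by omega, by omega, Or.inr rfl, fun _ => Or.inl rfl⟩
    · obtain ⟨v, hv, heq⟩ := (hmemE2 _).mp h
      have hiv := hidx v hv
      have e2 : fN (nbr v) = q (idx v) := by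
        rw [← hiv.2]; exact hfN_spine _ hiv.1
      have h2 := hfN_leaf v hv
      have b1 := hq1 (idx v)
      have b2 := hq2 (idx v)
      refine ⟨idx v, idx v, le_refl _, by omega, hiv.1, ?_⟩
      rcases Sym2.eq_iff.mp heq with ⟨h1, h2'⟩ | ⟨h1, h2'⟩
      · subst h1; subst h2'
        exact ⟨h2.1, by omega, h2.2.1, by omega, Or.inr hiv.2, fun hc => absurd rfl hc⟩
      · subst h1; subst h2'
        exact ⟨by omega, h2.1, by omega, h2.2.1, Or.inl hiv.2, fun hc => absurd rfl hc⟩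
  -- crossing-freeness
  have hnocross : ∀ uu vv xx yy : Fin n, T.Adj uu vv → T.Adj xx yy →
      uu ≠ xx → uu ≠ yy → vv ≠ xx → vv ≠ yy →
      ¬ chordsCross (f uu) (f vv) (f xx) (f yy) := by
    intro uu vv xx yy h1 h2 d1 d2 d3 d4
    obtain ⟨i1, j1, hij1, hji1, hj1s, a1, a2, a3, a4, w1, w2⟩ := hdesc uu vv h1
    obtain ⟨i2, j2, hij2, hji2, hj2s, b1, b2, b3, b4, w3, w4⟩ := hdesc xx yy h2
    by_cases hsep : j1 < i2 ∨ j2 < i1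
    · apply sep_noCross
      have hmax1 : (max (f uu) (f vv)).val = max (fN uu) (fN vv) := fin_val_max _ _
      have hmin1 : (min (f uu) (f vv)).val = min (fN uu) (fN vv) := fin_val_min _ _
      have hmax2 : (max (f xx) (f yy)).val = max (fN xx) (fN yy) := fin_val_max _ _
      have hmin2 : (min (f xx) (f yy)).val = min (fN xx) (fN yy) := fin_val_min _ _
      rcases hsep with h | h
      · left
        rw [hmax1, hmin2]
        have hst := htsucc j1
        have hmm := htmono (j1 + 1) i2 h
        omega
      · right
        rw [hmax2, hmin1]
        have hst := htsucc j2
        have hmm := htmono (j2 + 1) i1 h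
        omega
    · exfalso
      push_neg at hsep
      have hk1 : u (max i1 i2) = uu ∨ u (max i1 i2) = vv := by
        rcases (by omega : max i1 i2 = i1 ∨ (max i1 i2 = j1 ∧ j1 ≠ i1)) with h | ⟨h, hne⟩
        · rw [h]; exact w1
        · rw [h]; exact w2 hne
      have hk2 : u (max i1 i2) = xx ∨ u (max i1 i2) = yy := by
        rcases (by omega : max i1 i2 = i2 ∨ (max i1 i2 = j2 ∧ j2 ≠ i2)) with h | ⟨h, hne⟩
        · rw [h]; exact w3
        · rw [h]; exact w4 hne
      rcases hk1 with h | h <;> rcases hk2 with h' | h'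
      · exact d1 (h ▸ h' ▸ rfl)
      · exact d2 (h ▸ h' ▸ rfl)
      · exact d3 (h ▸ h' ▸ rfl)
      · exact d4 (h ▸ h' ▸ rfl)
  exact ⟨f, hf_inj, hGadj, hnocross⟩

/-- For every `n` there is a convex geometric graph on `{1,…,n}` with `O(n log n)`
edges into which every `n`-vertex caterpillar embeds without crossings. -/
theorem stmt_15 :
    ∃ c : ℝ, 0 < c ∧ ∀ n : ℕ, ∃ G : SimpleGraph (Fin n),
      (∀ T : SimpleGraph (Fin n), IsCaterpillar T → ∃ f, IsPlaneEmb T G f) ∧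
      ((G.edgeSet.ncard : ℝ)) ≤ c * (n : ℝ) * Real.log n := by
  refine ⟨64, by norm_num, fun n => ⟨Gdef n, ?_, ?_⟩⟩
  · -- every caterpillar embeds
    intro T hcat
    obtain ⟨htree, s, u0, hinj, hpath, hcov⟩ := hcat
    rcases lt_or_ge n 3 with hn | hn
    · -- small cases n ≤ 2 : the identity works
      refine ⟨id, Function.injective_id, ?_, ?_⟩
      · intro a b hab
        simp only [id_eq]
        refine ⟨hab.ne, ?_⟩
        have h1 := a.isLt
        have h2 := b.isLt
        have h3 : 1 ≤ pw2 (a.val + 1) := Nat.one_le_two_pow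
        have h4 : 1 ≤ pw2 (b.val + 1) := Nat.one_le_two_pow
        have h5 : RR a.val = 4 * pw2 (a.val + 1) := rfl
        have h6 : RR b.val = 4 * pw2 (b.val + 1) := rfl
        have h7 : RR a.val ≤ max (RR a.val) (RR b.val) := le_max_left _ _
        unfold Nat.dist
        omega
      · intro uu vv xx yy h1 h2 d1 d2 d3 d4 hc
        have e1 : uu.val ≠ vv.val := fun h => h1.ne (Fin.ext h)
        have e2 : uu.val ≠ xx.val := fun h => d1 (Fin.ext h)
        have e3 : vv.val ≠ xx.val := fun h => d3 (Fin.ext h)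
        have := uu.isLt
        have := vv.isLt
        have := xx.isLt
        omega
    · -- main case n ≥ 3
      have hs : 0 < s := by
        rcases Nat.eq_zero_or_pos s with h | h
        · exfalso
          apply no_spine_absurd hn htree
          intro v hv
          obtain ⟨i, _⟩ := hcov v hv
          exact absurd i.isLt (by omega)
        · exact h
      set u' : ℕ → Fin n := fun i => if h : i < s then u0 ⟨i, h⟩ else u0 ⟨0, hs⟩ with hu'def
      apply embed n s hn hs T htree u'
      · intro i j hi hj hij
        simp only [hu'def, dif_pos hi, dif_pos hj] at hij
        have := hinj hij
        exact congrArg Fin.val this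
      · intro i hi
        have hi' : i < s := by omega
        simp only [hu'def, dif_pos hi, dif_pos hi']
        exact hpath ⟨i, hi'⟩ ⟨i + 1, hi⟩ rfl
      · intro v hv
        obtain ⟨i0, hi0⟩ := hcov v hv
        refine ⟨i0.val, i0.isLt, ?_⟩
        simp only [hu'def, dif_pos i0.isLt]
        rw [Fin.eta]
        exact hi0
  · -- edge count
    have hnc : (Gdef n).edgeSet.ncard = (Gdef n).edgeFinset.card := by
      rw [← SimpleGraph.coe_edgeFinset, Set.ncard_coe_finset]
    rcases lt_or_ge n 2 with hn | hn
    · -- n ≤ 1 : no edges at all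
      have hempty : (Gdef n).edgeFinset.card = 0 := by
        rw [Finset.card_eq_zero, Finset.eq_empty_iff_forall_notMem]
        intro e he
        induction e with
        | _ a b =>
          rw [SimpleGraph.mem_edgeFinset, SimpleGraph.mem_edgeSet] at he
          have := a.isLt
          have := b.isLt
          exact he.1 (Fin.ext (by omega))
      rw [hnc, hempty]
      have h01 : n = 0 ∨ n = 1 := by omega
      rcases h01 with h | h <;> subst h <;> simp
    · -- n ≥ 2
      rw [hnc]
      have hcount := card_edge n
      have hcast : ((Gdef n).edgeFinset.card : ℝ) ≤ ((8 * (n * (Nat.log 2 n + 1)) : ℕ) : ℝ) := by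
        exact_mod_cast hcount
      refine hcast.trans ?_
      push_cast
      have hn2 : (2 : ℝ) ≤ (n : ℝ) := by exact_mod_cast hn
      have hlogn : Real.log 2 ≤ Real.log n := Real.log_le_log (by norm_num) hn2
      have hlog2 : (0.6931471803 : ℝ) < Real.log 2 := Real.log_two_gt_d9
      have hl1 : (Nat.log 2 n : ℝ) ≤ Real.logb 2 n := Real.natLog_le_logb n 2
      rw [Real.logb, le_div_iff₀ (by linarith)] at hl1
      have hlcast : (0 : ℝ) ≤ (Nat.log 2 n : ℝ) := Nat.cast_nonneg _
      have hL2 : (Nat.log 2 n : ℝ) ≤ 2 * Real.log n := by nlinarith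
      have h1 : (1 : ℝ) ≤ 2 * Real.log n := by nlinarith
      have hnn : (0 : ℝ) ≤ (n : ℝ) := by positivity
      have hkey : (n : ℝ) * ((Nat.log 2 n : ℝ) + 1) ≤ (n : ℝ) * (4 * Real.log n) :=
        mul_le_mul_of_nonneg_left (by linarith) hnn
      nlinarith [mul_nonneg hnn (Real.log_nonneg (by linarith : (1:ℝ) ≤ (n:ℝ)))]
end
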